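/- arXiv:2503.24159 — 6 statements merged into one kernel-verified Lean document; each statement's English description precedes it below -/
import Mathlib

section
/- Let F : ℝ^N → ℝ^N be M-strongly monotone and L-Lipschitz with 0 < M ≤ L < ∞, let S ⊆ ℝ^N be a nonempty closed convex set, and let η ∈ (0, 2M/L²). Then there exists a unique point s* ∈ S satisfying ⟨F(s*), s − s*⟩ ≥ 0 for all s ∈ S, and for every initial point s₀ ∈ ℝ^N the forward-backward iterates s_{k+1} = proj_S(s_k − η F(s_k)) satisfy ‖s_{k+1} − s*‖ ≤ √(1 − η(2M − ηL²)) · ‖s_k − s*‖ for all k ∈ ℕ; since √(1 − η(2M − ηL²)) < 1, the iterates converge linearly to s*. -/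
open scoped RealInnerProductSpace

set_option maxHeartbeats 1000000 in
/-- Linear convergence of forward-backward splitting to the unique
solution of the variational inequality VI(F, S) for a strongly monotone Lipschitz map. -/
theorem stmt0 {N : ℕ} (F : EuclideanSpace ℝ (Fin N) → EuclideanSpace ℝ (Fin N))
    (M L : ℝ) (hM : 0 < M) (hML : M ≤ L)
    (hmono : ∀ x y, M * ‖x - y‖ ^ 2 ≤ ⟪F x - F y, x - y⟫)
    (hlip : ∀ x y, ‖F x - F y‖ ≤ L * ‖x - y‖)
    (S : Set (EuclideanSpace ℝ (Fin N))) (hSne : S.Nonempty) (hScl : IsClosed S)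
    (hScv : Convex ℝ S)
    (η : ℝ) (hη : 0 < η) (hη2 : η < 2 * M / L ^ 2)
    (proj : EuclideanSpace ℝ (Fin N) → EuclideanSpace ℝ (Fin N))
    (hproj : ∀ x, proj x ∈ S ∧ ∀ y ∈ S, ‖x - proj x‖ ≤ ‖x - y‖) :
    ∃ sstar ∈ S,
      (∀ s ∈ S, 0 ≤ ⟪F sstar, s - sstar⟫) ∧
      (∀ s' ∈ S, (∀ s ∈ S, 0 ≤ ⟪F s', s - s'⟫) → s' = sstar) ∧
      Real.sqrt (1 - η * (2 * M - η * L ^ 2)) < 1 ∧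
      ∀ seq : ℕ → EuclideanSpace ℝ (Fin N),
        (∀ k, seq (k + 1) = proj (seq k - η • F (seq k))) →
        (∀ k, ‖seq (k + 1) - sstar‖ ≤
            Real.sqrt (1 - η * (2 * M - η * L ^ 2)) * ‖seq k - sstar‖) ∧
        Filter.Tendsto seq Filter.atTop (nhds sstar) := by
  have hL : 0 < L := lt_of_lt_of_le hM hML
  set c : ℝ := 1 - η * (2 * M - η * L ^ 2) with hc
  set q : ℝ := Real.sqrt c with hqdef
  have hηL : η * L ^ 2 < 2 * M := by
    rw [lt_div_iff₀ (by positivity)] at hη2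
    linarith [hη2]
  have hML2 : (0:ℝ) ≤ L ^ 2 - M ^ 2 := by nlinarith
  have hc0 : 0 ≤ c := by
    nlinarith [sq_nonneg (1 - η * M), mul_nonneg (sq_nonneg η) hML2]
  have hc1 : c < 1 := by nlinarith
  have hq0 : 0 ≤ q := Real.sqrt_nonneg _
  have hq1 : q < 1 := by
    rw [hqdef, show (1 : ℝ) = Real.sqrt 1 by simp]
    exact Real.sqrt_lt_sqrt hc0 (by simpa using hc1)
  -- characterization of projection
  have hchar : ∀ x, ∀ w ∈ S, ⟪x - proj x, w - proj x⟫ ≤ 0 := by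
    intro x
    haveI : Nonempty S := hSne.to_subtype
    have hmem := (hproj x).1
    rw [← norm_eq_iInf_iff_real_inner_le_zero hScv hmem]
    refine le_antisymm (le_ciInf fun w => (hproj x).2 w w.2) ?_
    exact ciInf_le ⟨0, fun _ ⟨w, h⟩ => h ▸ norm_nonneg _⟩ (⟨proj x, hmem⟩ : S)
  -- nonexpansiveness
  have hne : ∀ u v, ‖proj u - proj v‖ ≤ ‖u - v‖ := by
    intro u v
    have h1 : ⟪u - proj u, proj v - proj u⟫ ≤ 0 := hchar u (proj v) (hproj v).1
    have h2 : ⟪v - proj v, proj u - proj v⟫ ≤ 0 := hchar v (proj u) (hproj u).1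
    have expand : ∀ w, ⟪u - v, w⟫ =
        ⟪u - proj u, w⟫ + ⟪proj u - proj v, w⟫ - ⟪v - proj v, w⟫ := by
      intro w
      simp only [inner_sub_left]
      ring
    have e1 : ⟪u - proj u, proj u - proj v⟫ = - ⟪u - proj u, proj v - proj u⟫ := by
      rw [show proj u - proj v = -(proj v - proj u) by abel, inner_neg_right]
    have key : ‖proj u - proj v‖ ^ 2 ≤ ⟪u - v, proj u - proj v⟫ := by
      rw [expand, e1, ← real_inner_self_eq_norm_sq]
      linarith
    have hcs : ⟪u - v, proj u - proj v⟫ ≤ ‖u - v‖ * ‖proj u - proj v‖ :=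
      real_inner_le_norm _ _
    rcases eq_or_lt_of_le (norm_nonneg (proj u - proj v)) with h0 | h0
    · rw [← h0]; exact norm_nonneg _
    · have : ‖proj u - proj v‖ * ‖proj u - proj v‖ ≤ ‖u - v‖ * ‖proj u - proj v‖ := by
        nlinarith
      exact le_of_mul_le_mul_right this h0
  -- contraction
  have hcontr : ∀ x y, ‖proj (x - η • F x) - proj (y - η • F y)‖ ≤ q * ‖x - y‖ := by
    intro x y
    have h1 := hne (x - η • F x) (y - η • F y)
    have hexp : ‖(x - η • F x) - (y - η • F y)‖ ^ 2 =
        ‖x - y‖ ^ 2 - 2 * η * ⟪F x - F y, x - y⟫ + η ^ 2 * ‖F x - F y‖ ^ 2 := by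
      have heq : (x - η • F x) - (y - η • F y) = (x - y) - η • (F x - F y) := by
        rw [smul_sub]; abel
      rw [heq, norm_sub_sq_real, real_inner_smul_right, norm_smul]
      rw [real_inner_comm]
      simp [abs_of_pos hη, mul_pow]
      ring
    have hmono' := hmono x y
    have hlip' := hlip x y
    have hlipsq : ‖F x - F y‖ ^ 2 ≤ L ^ 2 * ‖x - y‖ ^ 2 := by
      have := norm_nonneg (F x - F y)
      nlinarith
    have hbound : ‖(x - η • F x) - (y - η • F y)‖ ^ 2 ≤ c * ‖x - y‖ ^ 2 := by
      rw [hexp, hc]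
      nlinarith [sq_nonneg η]
    calc ‖proj (x - η • F x) - proj (y - η • F y)‖ ≤ ‖(x - η • F x) - (y - η • F y)‖ := h1
      _ = Real.sqrt (‖(x - η • F x) - (y - η • F y)‖ ^ 2) := by
          rw [Real.sqrt_sq (norm_nonneg _)]
      _ ≤ Real.sqrt (c * ‖x - y‖ ^ 2) := Real.sqrt_le_sqrt hbound
      _ = q * ‖x - y‖ := by
          rw [Real.sqrt_mul hc0, Real.sqrt_sq (norm_nonneg _)]
  -- fixed point
  set T : EuclideanSpace ℝ (Fin N) → EuclideanSpace ℝ (Fin N) :=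
    fun x => proj (x - η • F x) with hT
  have hlipT : LipschitzWith ⟨q, hq0⟩ T :=
    LipschitzWith.of_dist_le_mul fun x y => by
      rw [dist_eq_norm, dist_eq_norm]; exact hcontr x y
  have hcw : ContractingWith ⟨q, hq0⟩ T := ⟨by exact_mod_cast hq1, hlipT⟩
  obtain ⟨sstar, hfix⟩ : ∃ y, T y = y :=
    ⟨ContractingWith.fixedPoint T hcw, ContractingWith.fixedPoint_isFixedPt hcw⟩
  have hsmem : sstar ∈ S := by rw [← hfix]; exact (hproj _).1
  -- VI property
  have hVI : ∀ s ∈ S, 0 ≤ ⟪F sstar, s - sstar⟫ := by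
    intro s hs
    have h := hchar (sstar - η • F sstar) s hs
    have hp : proj (sstar - η • F sstar) = sstar := hfix
    rw [hp] at h
    have : (sstar - η • F sstar) - sstar = -(η • F sstar) := by abel
    rw [this, inner_neg_left, real_inner_smul_left] at h
    nlinarith
  refine ⟨sstar, hsmem, hVI, ?_, hq1, ?_⟩
  · -- uniqueness
    intro s' hs' hVI'
    have h1 := hVI' sstar hsmem
    have h2 := hVI s' hs'
    have hm := hmono s' sstar
    have hsum : ⟪F s' - F sstar, s' - sstar⟫ ≤ 0 := by
      rw [inner_sub_left]
      have : ⟪F sstar, s' - sstar⟫ = - ⟪F sstar, sstar - s'⟫ := by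
        rw [← inner_neg_right]; congr 1; abel
      have h1' : ⟪F s', s' - sstar⟫ = - ⟪F s', sstar - s'⟫ := by
        rw [← inner_neg_right]; congr 1; abel
      rw [h1']
      linarith
    have : ‖s' - sstar‖ ^ 2 ≤ 0 := by nlinarith
    have hn : ‖s' - sstar‖ = 0 := by nlinarith [norm_nonneg (s' - sstar), sq_nonneg ‖s' - sstar‖]
    exact sub_eq_zero.mp (norm_eq_zero.mp hn)
  · -- convergence
    intro seq hrec
    have hstep : ∀ k, ‖seq (k + 1) - sstar‖ ≤ q * ‖seq k - sstar‖ := by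
      intro k
      rw [hrec k]
      have h := hcontr (seq k) sstar
      rwa [show proj (sstar - η • F sstar) = sstar from hfix] at h
    refine ⟨hstep, ?_⟩
    have hb : ∀ k, dist (seq k) sstar ≤ q ^ k * dist (seq 0) sstar := by
      intro k
      induction k with
      | zero => simp
      | succ n ih =>
        have h1 : dist (seq (n + 1)) sstar ≤ q * dist (seq n) sstar := by
          simpa [dist_eq_norm] using hstep n
        calc dist (seq (n + 1)) sstar ≤ q * dist (seq n) sstar := h1
          _ ≤ q * (q ^ n * dist (seq 0) sstar) := by
              exact mul_le_mul_of_nonneg_left ih hq0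
          _ = q ^ (n + 1) * dist (seq 0) sstar := by ring
    have htend : Filter.Tendsto (fun k => q ^ k * dist (seq 0) sstar)
        Filter.atTop (nhds 0) := by
      simpa using (tendsto_pow_atTop_nhds_zero_of_lt_one hq0 hq1).mul_const
        (dist (seq 0) sstar)
    rw [tendsto_iff_dist_tendsto_zero]
    exact squeeze_zero (fun k => dist_nonneg) hb htend
end

section
/- Let A be a real n × n matrix whose symmetric part satisfies (1/2)(A + Aᵀ) ⪰ μ I_n for some μ ≥ 0, and let B be a real m × m symmetric positive semidefinite matrix with smallest eigenvalue λ_min(B). Then for every real n × m matrix X, the Frobenius inner product satisfies trace((A X B)ᵀ X) ≥ μ · λ_min(B) · ‖X‖_F². Consequently, the linear map X ↦ A X B on n × m real matrices is (μ·λ_min(B))-strongly monotone with respect to the Frobenius inner product. -/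
open scoped Matrix

/-- Trace of a real PSD matrix is nonnegative. -/
lemma psd_trace_nonneg {k : ℕ} {M : Matrix (Fin k) (Fin k) ℝ} (hM : M.PosSemidef) :
    0 ≤ Matrix.trace M := by
  rw [Matrix.trace]
  apply Finset.sum_nonneg
  intro i _
  exact hM.diag_nonneg

open scoped MatrixOrder

/-- Trace of a product of real PSD matrices is nonnegative. -/
lemma psd_trace_mul_nonneg {k : ℕ} {M N : Matrix (Fin k) (Fin k) ℝ}
    (hM : M.PosSemidef) (hN : N.PosSemidef) : 0 ≤ Matrix.trace (M * N) := by
  set S := CFC.sqrt M with hSdef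
  have hS : S.PosSemidef := Matrix.LE.le.posSemidef (CFC.sqrt_nonneg M)
  have hSS : S * S = M := CFC.sqrt_mul_sqrt_self M hM.nonneg
  have h1 : Matrix.trace (M * N) = Matrix.trace (S * N * S) := by
    conv_lhs => rw [← hSS]
    rw [Matrix.mul_assoc, Matrix.trace_mul_comm]
  rw [h1]
  have : (Sᴴ * N * S).PosSemidef := hN.conjTranspose_mul_mul_same S
  rw [hS.1] at this
  exact psd_trace_nonneg this

lemma psd_sub_smul {k : ℕ} {B : Matrix (Fin k) (Fin k) ℝ} (hB : B.PosSemidef)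
    (c : ℝ) (hc : ∀ i, c ≤ hB.1.eigenvalues i) :
    (B - c • (1 : Matrix (Fin k) (Fin k) ℝ)).PosSemidef := by
  set U := (hB.1.eigenvectorUnitary : Matrix (Fin k) (Fin k) ℝ) with hU
  have hUU : U * star U = 1 := (Matrix.mem_unitaryGroup_iff).mp hB.1.eigenvectorUnitary.2
  have hspec : B = U * Matrix.diagonal (RCLike.ofReal ∘ hB.1.eigenvalues) * star U :=
    hB.1.spectral_theorem
  have hD : Matrix.diagonal (fun i => hB.1.eigenvalues i - c)
      = Matrix.diagonal (RCLike.ofReal ∘ hB.1.eigenvalues)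
        - c • (1 : Matrix (Fin k) (Fin k) ℝ) := by
    ext i j
    by_cases h : i = j <;>
      simp [h, Matrix.diagonal_apply, Matrix.one_apply, RCLike.ofReal_real_eq_id]
  have key : U * Matrix.diagonal (fun i => hB.1.eigenvalues i - c) * star U
      = B - c • (1 : Matrix (Fin k) (Fin k) ℝ) := by
    rw [hD, Matrix.mul_sub, Matrix.sub_mul, ← hspec]
    congr 1
    rw [Matrix.mul_smul, Matrix.smul_mul, Matrix.mul_one, hUU]
  have hd : (Matrix.diagonal (fun i => hB.1.eigenvalues i - c)).PosSemidef := by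
    apply Matrix.PosSemidef.diagonal
    intro i
    simp only [Pi.zero_apply, sub_nonneg]
    exact hc i
  have := hd.mul_mul_conjTranspose_same U
  rw [show Uᴴ = star U from rfl] at this
  rwa [key] at this

/-- If the symmetric part of `A` satisfies `(1/2)(A + Aᵀ) ⪰ μ I` with
`μ ≥ 0` and `B` is symmetric positive semidefinite with smallest eigenvalue
`λ_min(B)`, then `trace((A X B)ᵀ X) ≥ μ·λ_min(B)·‖X‖_F²` for every `X`; i.e. the linear
map `X ↦ A X B` is `(μ·λ_min(B))`-strongly monotone for the Frobenius inner product. -/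
theorem stmt7 {n m : ℕ} (A : Matrix (Fin n) (Fin n) ℝ) (μ : ℝ) (hμ : 0 ≤ μ)
    (hA : (((1 : ℝ) / 2) • (A + Aᵀ) - μ • (1 : Matrix (Fin n) (Fin n) ℝ)).PosSemidef)
    (B : Matrix (Fin m) (Fin m) ℝ) (hB : B.PosSemidef)
    (X : Matrix (Fin n) (Fin m) ℝ) :
    μ * (⨅ i, hB.1.eigenvalues i) * Matrix.trace (Xᵀ * X) ≤
      Matrix.trace ((A * X * B)ᵀ * X) := by
  set c := ⨅ i, hB.1.eigenvalues i with hc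
  set S := CFC.sqrt B with hSdef
  have hS : S.PosSemidef := Matrix.LE.le.posSemidef (CFC.sqrt_nonneg B)
  have hSsym : Sᵀ = S := by
    rw [← Matrix.conjTranspose_eq_transpose_of_trivial]; exact hS.1
  have hBsym : Bᵀ = B := by
    rw [← Matrix.conjTranspose_eq_transpose_of_trivial]; exact hB.1
  have hSS : S * S = B := CFC.sqrt_mul_sqrt_self B hB.nonneg
  -- rewrite the RHS as trace ((X*S)ᵀ * Aᵀ * (X*S))
  have e1 : Matrix.trace ((A * X * B)ᵀ * X) = Matrix.trace (B * (Xᵀ * Aᵀ * X)) := by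
    rw [Matrix.transpose_mul, Matrix.transpose_mul, hBsym, Matrix.mul_assoc]
  have e2 : Matrix.trace ((X * S)ᵀ * Aᵀ * (X * S)) = Matrix.trace (B * (Xᵀ * Aᵀ * X)) := by
    rw [Matrix.transpose_mul, hSsym]
    rw [show S * Xᵀ * Aᵀ * (X * S) = S * (Xᵀ * Aᵀ * X * S) by
      simp only [Matrix.mul_assoc]]
    rw [Matrix.trace_mul_comm, Matrix.mul_assoc (Xᵀ * Aᵀ * X) S S, hSS,
      Matrix.trace_mul_comm]
  have hRHS : Matrix.trace ((A * X * B)ᵀ * X)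
      = Matrix.trace ((X * S)ᵀ * Aᵀ * (X * S)) := e1.trans e2.symm
  rw [hRHS]
  set Y := X * S with hY
  -- key inequality 1: trace (Yᵀ Aᵀ Y) ≥ μ trace (Yᵀ Y)
  have h1 : μ * Matrix.trace (Yᵀ * Y) ≤ Matrix.trace (Yᵀ * Aᵀ * Y) := by
    have hpsd : (Yᴴ * (((1:ℝ)/2) • (A + Aᵀ) - μ • 1) * Y).PosSemidef :=
      hA.conjTranspose_mul_mul_same Y
    rw [Matrix.conjTranspose_eq_transpose_of_trivial] at hpsd
    have htr := psd_trace_nonneg hpsd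
    have hAA : Matrix.trace (Yᵀ * A * Y) = Matrix.trace (Yᵀ * Aᵀ * Y) := by
      rw [← Matrix.trace_transpose (Yᵀ * A * Y)]
      simp [Matrix.transpose_mul, Matrix.mul_assoc, Matrix.trace_mul_comm (Yᵀ * Aᵀ) Y,
        Matrix.trace_mul_comm Yᵀ (Aᵀ * Y)]
    have hexp : Matrix.trace (Yᵀ * (((1:ℝ)/2) • (A + Aᵀ) - μ • 1) * Y)
        = Matrix.trace (Yᵀ * Aᵀ * Y) - μ * Matrix.trace (Yᵀ * Y) := by
      rw [Matrix.mul_sub, Matrix.sub_mul, Matrix.trace_sub,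
        Matrix.mul_smul, Matrix.smul_mul, Matrix.trace_smul,
        Matrix.mul_smul, Matrix.smul_mul, Matrix.trace_smul,
        Matrix.mul_add, Matrix.add_mul, Matrix.trace_add, Matrix.mul_one]
      rw [hAA]
      simp only [smul_eq_mul]
      ring
    rw [hexp] at htr
    linarith
  -- trace (Yᵀ Y) = trace (Xᵀ X B)
  have hYY : Matrix.trace (Yᵀ * Y) = Matrix.trace (Xᵀ * X * B) := by
    rw [hY, Matrix.transpose_mul, hSsym]
    rw [show S * Xᵀ * (X * S) = S * (Xᵀ * X) * S by simp only [Matrix.mul_assoc]]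
    rw [Matrix.trace_mul_comm (S * (Xᵀ * X)) S, ← Matrix.mul_assoc,
      Matrix.mul_assoc S S, ← Matrix.mul_assoc S S (Xᵀ * X), hSS,
      Matrix.trace_mul_comm B (Xᵀ * X)]
  have hXX : (Xᵀ * X).PosSemidef := by
    have := Matrix.posSemidef_conjTranspose_mul_self X
    rwa [Matrix.conjTranspose_eq_transpose_of_trivial] at this
  have h2 : c * Matrix.trace (Xᵀ * X) ≤ Matrix.trace (Xᵀ * X * B) := by
    have hcle : ∀ i, c ≤ hB.1.eigenvalues i := fun i =>
      ciInf_le (Set.Finite.bddBelow (Set.finite_range _)) i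
    have := psd_trace_mul_nonneg hXX (psd_sub_smul hB c hcle)
    rw [Matrix.mul_sub, Matrix.trace_sub, Matrix.mul_smul, Matrix.mul_one,
      Matrix.trace_smul, smul_eq_mul] at this
    linarith
  calc μ * c * Matrix.trace (Xᵀ * X) = μ * (c * Matrix.trace (Xᵀ * X)) := by ring
    _ ≤ μ * Matrix.trace (Xᵀ * X * B) := mul_le_mul_of_nonneg_left h2 hμ
    _ = μ * Matrix.trace (Yᵀ * Y) := by rw [hYY]
    _ ≤ Matrix.trace (Yᵀ * Aᵀ * Y) := h1
end

section
/- Strong-monotonicity part of the system-level pseudo-gradient bound: let G be a real a × a matrix whose symmetric part satisfies (1/2)(G + Gᵀ) ⪰ μ I_a with μ ≥ 0, let W be a real b × c matrix, and let h be a real a × b matrix. Define the affine map F(Φ) = 2·G·Φ·(W Wᵀ) + h on a × b real matrices. Then F is strongly monotone with modulus 2·μ·λ_min(W Wᵀ) with respect to the Frobenius inner product: for all a × b real matrices Φ, Ψ, ⟨F(Φ) − F(Ψ), Φ − Ψ⟩_F ≥ 2μ·λ_min(W Wᵀ)·‖Φ − Ψ‖_F². (Applied with G = D_Φᵀ H_Φ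 and W = W_w, when D_Φᵀ H_Φ is symmetric positive semidefinite this modulus equals the paper's M_{F_Φ} = 2σ_min(D_Φᵀ H_Φ)σ_min²(W_w).) -/
open scoped Matrix

/-- The Frobenius norm of a real matrix. -/
noncomputable def frobNorm {a b : ℕ} (X : Matrix (Fin a) (Fin b) ℝ) : ℝ :=
  Real.sqrt (Matrix.trace (Xᵀ * X))

lemma trace_transpose_mul_self_nonneg {m n : Type*} [Fintype m] [Fintype n]
    (X : Matrix m n ℝ) : 0 ≤ Matrix.trace (Xᵀ * X) := by
  classical
  simp only [Matrix.trace, Matrix.diag, Matrix.mul_apply, Matrix.transpose_apply]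
  refine Finset.sum_nonneg fun i _ => Finset.sum_nonneg fun j _ => mul_self_nonneg _

lemma trace_conj_nonneg {n m : Type*} [Fintype n] [Fintype m] [DecidableEq n]
    {A : Matrix n n ℝ} (hA : A.PosSemidef) (X : Matrix n m ℝ) :
    0 ≤ Matrix.trace (Xᵀ * A * X) := by
  open scoped MatrixOrder in obtain ⟨B, hB⟩ := CStarAlgebra.nonneg_iff_eq_star_mul_self.mp hA.nonneg
  rw [Matrix.star_eq_conjTranspose] at hB
  have : Xᵀ * A * X = (B * X)ᵀ * (B * X) := by
    rw [hB]; simp [Matrix.transpose_mul, Matrix.mul_assoc, Matrix.conjTranspose_eq_transpose_of_trivial]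
  rw [this]
  exact trace_transpose_mul_self_nonneg _

lemma trace_mul_psd_nonneg {n : Type*} [Fintype n] [DecidableEq n]
    {A S : Matrix n n ℝ} (hA : A.PosSemidef) (hS : S.PosSemidef) :
    0 ≤ Matrix.trace (A * S) := by
  open scoped MatrixOrder in obtain ⟨C, hC⟩ := CStarAlgebra.nonneg_iff_eq_star_mul_self.mp hS.nonneg
  rw [Matrix.star_eq_conjTranspose] at hC
  rw [hC, Matrix.conjTranspose_eq_transpose_of_trivial, ← Matrix.mul_assoc,
    Matrix.trace_mul_cycle]
  have : C * A * Cᵀ = (Cᵀ)ᵀ * A * Cᵀ := by rw [Matrix.transpose_transpose]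
  rw [this]
  exact trace_conj_nonneg hA _

lemma sub_inf_smul_psd {n : Type*} [Fintype n] [DecidableEq n]
    {S : Matrix n n ℝ} (hS : S.IsHermitian) :
    (S - (⨅ i, hS.eigenvalues i) • (1 : Matrix n n ℝ)).PosSemidef := by
  set c := ⨅ i, hS.eigenvalues i with hc
  set U : Matrix n n ℝ := (hS.eigenvectorUnitary : Matrix n n ℝ)
  have hU : U * star U = 1 := (Matrix.mem_unitaryGroup_iff).mp hS.eigenvectorUnitary.2
  have hsp := hS.spectral_theorem
  have key : S - c • 1 = U * (Matrix.diagonal (fun i => hS.eigenvalues i - c)) * Uᴴ := by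
    have h1 : (c • (1 : Matrix n n ℝ)) = U * (c • 1) * star U := by
      rw [Matrix.mul_smul, Matrix.smul_mul, Matrix.mul_one, hU]
    calc S - c • 1 = U * Matrix.diagonal (RCLike.ofReal ∘ hS.eigenvalues) * star U
          - U * (c • 1) * star U := by
            simp only [Unitary.conjStarAlgAut_apply, Unitary.coe_star] at hsp
            rw [← hsp, ← h1]
      _ = U * (Matrix.diagonal (RCLike.ofReal ∘ hS.eigenvalues) - c • 1) * star U := by
          rw [← Matrix.sub_mul, ← Matrix.mul_sub]
      _ = U * (Matrix.diagonal (fun i => hS.eigenvalues i - c)) * Uᴴ := by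
          have hd : Matrix.diagonal (RCLike.ofReal ∘ hS.eigenvalues) - c • (1 : Matrix n n ℝ)
              = Matrix.diagonal (fun i => hS.eigenvalues i - c) := by
            ext i j
            by_cases hij : i = j <;>
              simp [hij, Matrix.diagonal_apply, Matrix.one_apply, RCLike.ofReal]
          rw [hd]; rfl
  rw [key]
  refine Matrix.PosSemidef.mul_mul_conjTranspose_same ?_ U
  refine Matrix.PosSemidef.diagonal fun i => ?_
  have hb : BddBelow (Set.range hS.eigenvalues) := Set.Finite.bddBelow (Set.finite_range _)
  have := ciInf_le hb i
  simp only [Pi.zero_apply]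
  linarith

/-- If the symmetric part of `G` satisfies `(1/2)(G + Gᵀ) ⪰ μ I` with
`μ ≥ 0`, the affine map `F(Φ) = 2 G Φ (W Wᵀ) + h` is strongly monotone with modulus
`2 μ λ_min(W Wᵀ)` for the Frobenius inner product `⟨X, Y⟩_F = trace(Xᵀ Y)`. -/
theorem stmt9 {a b c : ℕ} (G : Matrix (Fin a) (Fin a) ℝ) (μ : ℝ) (hμ : 0 ≤ μ)
    (hG : (((1 : ℝ) / 2) • (G + Gᵀ) - μ • (1 : Matrix (Fin a) (Fin a) ℝ)).PosSemidef)
    (W : Matrix (Fin b) (Fin c) ℝ) (hWW : (W * Wᵀ).IsHermitian)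
    (h Φ Ψ : Matrix (Fin a) (Fin b) ℝ) :
    2 * μ * (⨅ i, hWW.eigenvalues i) * frobNorm (Φ - Ψ) ^ 2 ≤
      Matrix.trace
        ((((2 : ℝ) • (G * Φ * (W * Wᵀ)) + h) - ((2 : ℝ) • (G * Ψ * (W * Wᵀ)) + h))ᵀ *
          (Φ - Ψ)) := by
  set Δ : Matrix (Fin a) (Fin b) ℝ := Φ - Ψ with hΔ
  set S : Matrix (Fin b) (Fin b) ℝ := W * Wᵀ with hSdef
  set P : Matrix (Fin a) (Fin a) ℝ :=
    ((1 : ℝ) / 2) • (G + Gᵀ) - μ • (1 : Matrix (Fin a) (Fin a) ℝ) with hPdef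
  set cmin : ℝ := ⨅ i, hWW.eigenvalues i with hcmin
  -- S is symmetric and PSD
  have hSt : Sᵀ = S := by rw [hSdef, Matrix.transpose_mul, Matrix.transpose_transpose]
  have hSpsd : S.PosSemidef := by
    have := Matrix.posSemidef_self_mul_conjTranspose W
    rwa [Matrix.conjTranspose_eq_transpose_of_trivial] at this
  -- simplify the difference
  have hdiff : (((2 : ℝ) • (G * Φ * S) + h) - ((2 : ℝ) • (G * Ψ * S) + h))
      = (2 : ℝ) • (G * Δ * S) := by
    rw [add_sub_add_right_eq_sub, ← smul_sub, hΔ, ← Matrix.sub_mul, ← Matrix.mul_sub]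
  rw [hdiff, Matrix.transpose_smul, Matrix.smul_mul, Matrix.trace_smul, smul_eq_mul]
  -- frobenius norm squared
  have hfro : frobNorm Δ ^ 2 = Matrix.trace (Δᵀ * Δ) :=
    Real.sq_sqrt (trace_transpose_mul_self_nonneg Δ)
  -- two expressions for T
  have hT1 : Matrix.trace ((G * Δ * S)ᵀ * Δ) = Matrix.trace (Δᵀ * Gᵀ * Δ * S) := by
    rw [Matrix.transpose_mul, hSt, Matrix.transpose_mul, Matrix.mul_assoc,
      Matrix.trace_mul_comm]
  have hT2 : Matrix.trace ((G * Δ * S)ᵀ * Δ) = Matrix.trace (Δᵀ * G * Δ * S) := by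
    rw [← Matrix.trace_transpose, Matrix.transpose_mul, Matrix.transpose_transpose]
    rw [Matrix.mul_assoc G Δ S, Matrix.mul_assoc, ← Matrix.mul_assoc, ← Matrix.mul_assoc]
  -- key positive traces
  have ht1 : 0 ≤ Matrix.trace ((Δᵀ * P * Δ) * S) := by
    refine trace_mul_psd_nonneg ?_ hSpsd
    have := hG.conjTranspose_mul_mul_same Δ
    rwa [Matrix.conjTranspose_eq_transpose_of_trivial] at this
  have hDpsd : (Δᵀ * Δ).PosSemidef := by
    have := Matrix.posSemidef_conjTranspose_mul_self Δ
    rwa [Matrix.conjTranspose_eq_transpose_of_trivial] at this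
  have ht2 : cmin * Matrix.trace (Δᵀ * Δ) ≤ Matrix.trace ((Δᵀ * Δ) * S) := by
    have hpsd := sub_inf_smul_psd hWW
    have h0 : 0 ≤ Matrix.trace ((Δᵀ * Δ) * (S - cmin • 1)) :=
      trace_mul_psd_nonneg hDpsd hpsd
    rw [Matrix.mul_sub, Matrix.trace_sub, Matrix.mul_smul, Matrix.mul_one,
      Matrix.trace_smul, smul_eq_mul] at h0
    linarith
  -- decompose the middle matrix
  have hsum : Matrix.trace (Δᵀ * Gᵀ * Δ * S) + Matrix.trace (Δᵀ * G * Δ * S)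
      = 2 * Matrix.trace ((Δᵀ * P * Δ) * S) + 2 * μ * Matrix.trace ((Δᵀ * Δ) * S) := by
    have hM : G + Gᵀ = (2 : ℝ) • P + (2 * μ) • (1 : Matrix (Fin a) (Fin a) ℝ) := by
      rw [hPdef]; module
    have hexp : Δᵀ * Gᵀ * Δ * S + Δᵀ * G * Δ * S
        = (2 : ℝ) • ((Δᵀ * P * Δ) * S) + (2 * μ) • ((Δᵀ * Δ) * S) := by
      have : Δᵀ * Gᵀ * Δ * S + Δᵀ * G * Δ * S = Δᵀ * (G + Gᵀ) * Δ * S := by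
        rw [Matrix.mul_add, Matrix.add_mul, Matrix.add_mul]; abel
      rw [this, hM, Matrix.mul_add, Matrix.add_mul, Matrix.add_mul,
        Matrix.mul_smul, Matrix.smul_mul, Matrix.smul_mul,
        Matrix.mul_smul, Matrix.smul_mul, Matrix.smul_mul, Matrix.mul_one]
    rw [← Matrix.trace_add, hexp, Matrix.trace_add, Matrix.trace_smul, Matrix.trace_smul,
      smul_eq_mul, smul_eq_mul]
  rw [hfro]
  nlinarith [hT1, hT2, ht1, ht2, hsum, hDpsd,
    mul_le_mul_of_nonneg_left ht2 hμ]
end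

section
/- Convergence of forward-backward vGFNE seeking for affine pseudo-gradients: let G be a real a × a matrix whose symmetric part satisfies (1/2)(G + Gᵀ) ⪰ μ I_a with μ > 0, let W be a real b × c matrix with W Wᵀ positive definite, and let h be a real a × b matrix. Define F(Φ) = 2GΦ(W Wᵀ) + h on a × b real matrices, and set M = 2μ·λ_min(W Wᵀ) and L = 2‖G‖₂‖W‖₂². Let U be a nonempty closed convex set of a × b real matrices and let η ∈ (0, 2M/L²). Then there exists a unique Φ* ∈ U satisfying ⟨F(Φ*), Φ − Φ*⟩_F ≥ 0 for all Φ ∈ U, and from any initialization Φ₀ the iterates Φ_{k+1} = proj_U(Φ_k − η F(Φ_k)) satisfy ‖Φ_{k+1} − Φ*‖_F ≤ √(1 − η(2M − ηL²))·‖Φ_k − Φ*‖_F for all k, where √(1 − η(2M − ηL²)) < 1, so the iterates converge linearly to Φ*. -/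
open scoped Matrix RealInnerProductSpace

/-- The spectral norm (ℓ2 operator norm, largest singular value) of a real matrix. -/
noncomputable def specNorm {a b : ℕ} (G : Matrix (Fin a) (Fin b) ℝ) : ℝ :=
  ‖LinearMap.toContinuousLinearMap (Matrix.toEuclideanLin G)‖

namespace Stmt10Aux

/-- Linear equivalence between matrices and Euclidean space. -/
noncomputable def matE (a b : ℕ) :
    Matrix (Fin a) (Fin b) ℝ ≃ₗ[ℝ] EuclideanSpace ℝ (Fin a × Fin b) :=
  (LinearEquiv.curry ℝ ℝ (Fin a) (Fin b)).symm.trans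
    (WithLp.linearEquiv 2 ℝ (Fin a × Fin b → ℝ)).symm

lemma matE_apply {a b : ℕ} (X : Matrix (Fin a) (Fin b) ℝ) (p : Fin a × Fin b) :
    matE a b X p = X p.1 p.2 := rfl

lemma inner_matE {a b : ℕ} (X Y : Matrix (Fin a) (Fin b) ℝ) :
    (inner ℝ (matE a b X) (matE a b Y) : ℝ) = Matrix.trace (Xᵀ * Y) := by
  simp only [Matrix.trace, Matrix.diag, Matrix.mul_apply, Matrix.transpose_apply]
  rw [PiLp.inner_apply]
  simp only [RCLike.inner_apply, conj_trivial, matE_apply]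
  rw [Fintype.sum_prod_type]
  exact Finset.sum_comm.trans
    (Finset.sum_congr rfl fun _ _ => Finset.sum_congr rfl fun _ _ => mul_comm _ _)

lemma frob_eq_norm {a b : ℕ} (X : Matrix (Fin a) (Fin b) ℝ) :
    frobNorm X = ‖matE a b X‖ := by
  rw [frobNorm, ← inner_matE, real_inner_self_eq_norm_mul_norm,
    Real.sqrt_mul_self (norm_nonneg _)]

section PSD

variable {n : Type*} [Fintype n] [DecidableEq n]

lemma conjT_eq_transpose {m : Type*} (X : Matrix m n ℝ) : Xᴴ = Xᵀ := by
  ext i j; simp [Matrix.conjTranspose_apply]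

lemma trace_nonneg_of_posSemidef {A : Matrix n n ℝ} (hA : A.PosSemidef) :
    0 ≤ A.trace := by
  obtain ⟨B, rfl⟩ : ∃ B : Matrix n n ℝ, _ = Bᴴ * B := by
    open MatrixOrder in
    exact CStarAlgebra.nonneg_iff_eq_star_mul_self.mp hA.nonneg
  simp only [Matrix.trace, Matrix.diag, Matrix.mul_apply, Matrix.conjTranspose_apply,
    star_trivial]
  exact Finset.sum_nonneg fun i _ => Finset.sum_nonneg fun j _ => mul_self_nonneg _

lemma trace_mul_nonneg {A B : Matrix n n ℝ} (hA : A.PosSemidef) (hB : B.PosSemidef) :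
    0 ≤ (A * B).trace := by
  obtain ⟨C, rfl⟩ : ∃ C : Matrix n n ℝ, _ = Cᴴ * C := by
    open MatrixOrder in
    exact CStarAlgebra.nonneg_iff_eq_star_mul_self.mp hB.nonneg
  rw [← Matrix.mul_assoc, Matrix.trace_mul_cycle]
  exact trace_nonneg_of_posSemidef (hA.mul_mul_conjTranspose_same C)

lemma sub_iInf_smul_posSemidef {S : Matrix n n ℝ} (hS : S.IsHermitian) :
    (S - (⨅ i, hS.eigenvalues i) • (1 : Matrix n n ℝ)).PosSemidef := by
  set t := ⨅ i, hS.eigenvalues i with ht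
  set V : Matrix n n ℝ := (Matrix.IsHermitian.eigenvectorUnitary hS : Matrix n n ℝ) with hV
  have hVV : V * star V = 1 := Matrix.mem_unitaryGroup_iff.mp
    (Matrix.IsHermitian.eigenvectorUnitary hS).2
  have hdiag : (Matrix.diagonal (fun i => hS.eigenvalues i - t)).PosSemidef :=
    Matrix.posSemidef_diagonal_iff.mpr fun i =>
      sub_nonneg.mpr (ciInf_le (Finite.bddBelow_range _) i)
  have h2 := hdiag.mul_mul_conjTranspose_same V
  have e1 : S = V * Matrix.diagonal hS.eigenvalues * star V := by
    have hst := hS.spectral_theorem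
    rw [RCLike.ofReal_real_eq_id] at hst
    simpa using hst
  have e2 : V * Matrix.diagonal (fun _ : n => t) * star V = t • (V * star V) := by
    rw [← Matrix.smul_one_eq_diagonal, Matrix.mul_smul, Matrix.mul_one, Matrix.smul_mul]
  have key : S - t • (1 : Matrix n n ℝ) =
      V * Matrix.diagonal (fun i => hS.eigenvalues i - t) * star V := by
    rw [← Matrix.diagonal_sub, Matrix.mul_sub, Matrix.sub_mul, e2, hVV, ← e1]
  rw [key, Matrix.star_eq_conjTranspose]; exact h2

end PSD

section Frob

variable {a b c : ℕ}

lemma frob_nonneg (X : Matrix (Fin a) (Fin b) ℝ) : 0 ≤ frobNorm X := Real.sqrt_nonneg _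

lemma posSemidef_transpose_mul_self (X : Matrix (Fin a) (Fin b) ℝ) :
    (Xᵀ * X).PosSemidef := by
  rw [← conjT_eq_transpose]; exact Matrix.posSemidef_conjTranspose_mul_self X

lemma frob_sq (X : Matrix (Fin a) (Fin b) ℝ) :
    frobNorm X ^ 2 = Matrix.trace (Xᵀ * X) :=
  Real.sq_sqrt (trace_nonneg_of_posSemidef (posSemidef_transpose_mul_self X))

lemma frob_transpose (X : Matrix (Fin a) (Fin b) ℝ) : frobNorm Xᵀ = frobNorm X := by
  rw [frobNorm, frobNorm, Matrix.transpose_transpose, Matrix.trace_mul_comm]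

lemma frob_smul (r : ℝ) (X : Matrix (Fin a) (Fin b) ℝ) :
    frobNorm (r • X) = |r| * frobNorm X := by
  rw [frobNorm, frobNorm, Matrix.transpose_smul, Matrix.smul_mul, Matrix.mul_smul,
    smul_smul, Matrix.trace_smul, smul_eq_mul, Real.sqrt_mul (mul_self_nonneg r),
    Real.sqrt_mul_self_eq_abs]

lemma mono_trace {a b : ℕ} (G : Matrix (Fin a) (Fin a) ℝ) {μ : ℝ} (hμ : 0 ≤ μ)
    (hG : (((1 : ℝ) / 2) • (G + Gᵀ) - μ • (1 : Matrix (Fin a) (Fin a) ℝ)).PosSemidef)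
    {S : Matrix (Fin b) (Fin b) ℝ} (hS : S.PosSemidef) {t : ℝ}
    (ht : (S - t • (1 : Matrix (Fin b) (Fin b) ℝ)).PosSemidef)
    (Δ : Matrix (Fin a) (Fin b) ℝ) :
    2 * μ * t * Matrix.trace (Δᵀ * Δ) ≤ Matrix.trace (((2:ℝ) • (G * Δ * S))ᵀ * Δ) := by
  have hSsym : Sᵀ = S := by rw [← conjT_eq_transpose]; exact hS.1
  set H : Matrix (Fin a) (Fin a) ℝ := ((1:ℝ)/2) • (G + Gᵀ) with hH
  set Q : Matrix (Fin a) (Fin a) ℝ := Δ * S * Δᵀ with hQ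
  have hQpsd : Q.PosSemidef := by
    have := hS.mul_mul_conjTranspose_same Δ
    rwa [conjT_eq_transpose] at this
  have hQsym : Qᵀ = Q := by
    rw [hQ, Matrix.transpose_mul, Matrix.transpose_mul, Matrix.transpose_transpose,
      hSsym, Matrix.mul_assoc]
  -- trace (Gᵀ * Q) = trace (G * Q)
  have hGQsymEq : Matrix.trace (Gᵀ * Q) = Matrix.trace (G * Q) := by
    calc Matrix.trace (Gᵀ * Q) = Matrix.trace ((Gᵀ * Q)ᵀ) := (Matrix.trace_transpose _).symm
      _ = Matrix.trace (Qᵀ * G) := by rw [Matrix.transpose_mul, Matrix.transpose_transpose]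
      _ = Matrix.trace (G * Q) := by rw [hQsym, Matrix.trace_mul_comm]
  -- trace ((G * Δ * S)ᵀ * Δ) = trace (H * Q)
  have step1 : Matrix.trace ((G * Δ * S)ᵀ * Δ) = Matrix.trace (H * Q) := by
    have l1 : Matrix.trace ((G * Δ * S)ᵀ * Δ) = Matrix.trace (Gᵀ * Q) := by
      rw [Matrix.transpose_mul, Matrix.transpose_mul, hSsym, hQ, Matrix.trace_mul_comm]
      conv_rhs => rw [Matrix.trace_mul_comm]
      simp only [Matrix.mul_assoc]
    have l2 : Matrix.trace (H * Q) = Matrix.trace (G * Q) := by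
      rw [hH, Matrix.smul_mul, Matrix.trace_smul, Matrix.add_mul, Matrix.trace_add,
        hGQsymEq, smul_eq_mul]
      ring
    rw [l1, hGQsymEq, l2]
  -- trace (H * Q) ≥ μ * trace Q
  have step2 : μ * Matrix.trace Q ≤ Matrix.trace (H * Q) := by
    have h0 := trace_mul_nonneg hG hQpsd
    have e : (H - μ • (1 : Matrix (Fin a) (Fin a) ℝ)) * Q = H * Q - μ • Q := by
      rw [Matrix.sub_mul, Matrix.smul_mul μ (1 : Matrix (Fin a) (Fin a) ℝ) Q, Matrix.one_mul]
    rw [e, Matrix.trace_sub, Matrix.trace_smul, smul_eq_mul, sub_nonneg] at h0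
    exact h0
  -- trace Q = trace (Δᵀ * Δ * S)
  have step3 : Matrix.trace Q = Matrix.trace (Δᵀ * Δ * S) := by
    rw [hQ, Matrix.trace_mul_comm, Matrix.mul_assoc]
  -- trace (Δᵀ * Δ * S) ≥ t * trace (Δᵀ * Δ)
  have step4 : t * Matrix.trace (Δᵀ * Δ) ≤ Matrix.trace (Δᵀ * Δ * S) := by
    have h0 := trace_mul_nonneg (posSemidef_transpose_mul_self Δ) ht
    rw [Matrix.mul_sub, Matrix.trace_sub, Matrix.mul_smul, Matrix.mul_one,
      Matrix.trace_smul, smul_eq_mul, sub_nonneg] at h0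
    exact h0
  have step0 : Matrix.trace (((2:ℝ) • (G * Δ * S))ᵀ * Δ)
      = 2 * Matrix.trace ((G * Δ * S)ᵀ * Δ) := by
    rw [Matrix.transpose_smul, Matrix.smul_mul, Matrix.trace_smul, smul_eq_mul]
  rw [step0, step1]
  have h2' := mul_le_mul_of_nonneg_left step4 hμ
  rw [← step3] at h2'
  nlinarith [step2]

end Frob

section Spec

variable {a b c : ℕ}

lemma eucl_norm_sq {n : ℕ} (v : EuclideanSpace ℝ (Fin n)) :
    ‖v‖ ^ 2 = ∑ i, v i ^ 2 := by
  rw [EuclideanSpace.norm_eq, Real.sq_sqrt (Finset.sum_nonneg fun i _ => sq_nonneg _)]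
  exact Finset.sum_congr rfl fun i _ => by rw [Real.norm_eq_abs, sq_abs]

lemma frob_sq_cols (Y : Matrix (Fin a) (Fin c) ℝ) :
    frobNorm Y ^ 2 = ∑ j, ‖(WithLp.equiv 2 (Fin a → ℝ)).symm (fun i => Y i j)‖ ^ 2 := by
  rw [frob_sq]
  simp only [eucl_norm_sq, WithLp.equiv_symm_apply, PiLp.toLp_apply]
  simp only [Matrix.trace, Matrix.diag, Matrix.mul_apply, Matrix.transpose_apply, sq]

lemma spec_bound_vec (A : Matrix (Fin a) (Fin b) ℝ) (v : EuclideanSpace ℝ (Fin b)) :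
    ‖Matrix.toEuclideanLin A v‖ ≤ specNorm A * ‖v‖ := by
  have := (LinearMap.toContinuousLinearMap (Matrix.toEuclideanLin A)).le_opNorm v
  simpa [specNorm, LinearMap.coe_toContinuousLinearMap'] using this

lemma frob_mul_le (A : Matrix (Fin a) (Fin b) ℝ) (X : Matrix (Fin b) (Fin c) ℝ) :
    frobNorm (A * X) ≤ specNorm A * frobNorm X := by
  have hs : 0 ≤ specNorm A := norm_nonneg _
  have key : frobNorm (A * X) ^ 2 ≤ (specNorm A * frobNorm X) ^ 2 := by
    rw [frob_sq_cols (A * X), mul_pow, frob_sq_cols X, Finset.mul_sum]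
    refine Finset.sum_le_sum fun j _ => ?_
    have hcol : (WithLp.equiv 2 (Fin a → ℝ)).symm (fun i => (A * X) i j)
        = Matrix.toEuclideanLin A ((WithLp.equiv 2 (Fin b → ℝ)).symm (fun i => X i j)) := by
      rw [WithLp.equiv_symm_apply, WithLp.equiv_symm_apply, Matrix.toEuclideanLin_apply_piLp_toLp]
      congr 1
    rw [hcol, ← mul_pow]
    exact pow_le_pow_left₀ (norm_nonneg _) (spec_bound_vec A _) 2
  calc frobNorm (A * X) = Real.sqrt (frobNorm (A * X) ^ 2) :=
        (Real.sqrt_sq (frob_nonneg _)).symm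
    _ ≤ Real.sqrt ((specNorm A * frobNorm X) ^ 2) := Real.sqrt_le_sqrt key
    _ = specNorm A * frobNorm X := Real.sqrt_sq (mul_nonneg hs (frob_nonneg _))

lemma spec_transpose (A : Matrix (Fin a) (Fin b) ℝ) : specNorm Aᵀ = specNorm A := by
  rw [specNorm, specNorm, ← conjT_eq_transpose,
    Matrix.toEuclideanLin_conjTranspose_eq_adjoint, LinearMap.adjoint_toContinuousLinearMap]
  exact LinearIsometryEquiv.norm_map ContinuousLinearMap.adjoint _

lemma frob_mul_right (X : Matrix (Fin a) (Fin b) ℝ) (B : Matrix (Fin b) (Fin c) ℝ) :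
    frobNorm (X * B) ≤ specNorm B * frobNorm X := by
  calc frobNorm (X * B) = frobNorm ((X * B)ᵀ) := (frob_transpose _).symm
    _ = frobNorm (Bᵀ * Xᵀ) := by rw [Matrix.transpose_mul]
    _ ≤ specNorm Bᵀ * frobNorm Xᵀ := frob_mul_le _ _
    _ = specNorm B * frobNorm X := by rw [spec_transpose, frob_transpose]

lemma spec_mul_le (A : Matrix (Fin a) (Fin b) ℝ) (B : Matrix (Fin b) (Fin c) ℝ) :
    specNorm (A * B) ≤ specNorm A * specNorm B := by
  rw [specNorm, specNorm, specNorm]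
  have e : Matrix.toEuclideanLin (A * B)
      = (Matrix.toEuclideanLin A).comp (Matrix.toEuclideanLin B) := by
    apply LinearMap.ext; intro v
    simp [Matrix.toEuclideanLin_apply, Matrix.mulVec_mulVec]
  have e2 : LinearMap.toContinuousLinearMap (Matrix.toEuclideanLin (A * B))
      = (LinearMap.toContinuousLinearMap (Matrix.toEuclideanLin A)).comp
        (LinearMap.toContinuousLinearMap (Matrix.toEuclideanLin B)) := by
    ext v
    simp [e, LinearMap.coe_toContinuousLinearMap']
  rw [e2]
  exact ContinuousLinearMap.opNorm_comp_le _ _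

end Spec

lemma abs_entry_le_frob {a b : ℕ} (X : Matrix (Fin a) (Fin b) ℝ) (i : Fin a) (j : Fin b) :
    |X i j| ≤ frobNorm X := by
  have e : Matrix.trace (Xᵀ * X) = ∑ p : Fin b, ∑ q : Fin a, X q p ^ 2 := by
    simp [Matrix.trace, Matrix.diag, Matrix.mul_apply, Matrix.transpose_apply, sq]
  have hsq : X i j ^ 2 ≤ Matrix.trace (Xᵀ * X) := by
    rw [e]
    calc X i j ^ 2 ≤ ∑ q : Fin a, X q j ^ 2 :=
          Finset.single_le_sum (f := fun q => X q j ^ 2) (fun q _ => sq_nonneg _)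
            (Finset.mem_univ i)
      _ ≤ ∑ p : Fin b, ∑ q : Fin a, X q p ^ 2 :=
          Finset.single_le_sum (f := fun p => ∑ q : Fin a, X q p ^ 2)
            (fun p _ => Finset.sum_nonneg fun q _ => sq_nonneg _) (Finset.mem_univ j)
  calc |X i j| = Real.sqrt (X i j ^ 2) := (Real.sqrt_sq_eq_abs _).symm
    _ ≤ Real.sqrt (Matrix.trace (Xᵀ * X)) := Real.sqrt_le_sqrt hsq
    _ = frobNorm X := rfl

section Hilbert

variable {E : Type*} [NormedAddCommGroup E] [InnerProductSpace ℝ E]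

lemma proj_char {K : Set E} (hK : Convex ℝ K) {u v : E} (hv : v ∈ K)
    (hmin : ∀ w ∈ K, ‖u - v‖ ≤ ‖u - w‖) :
    ∀ w ∈ K, (inner ℝ (u - v) (w - v) : ℝ) ≤ 0 := by
  have : Nonempty K := ⟨⟨v, hv⟩⟩
  have heq : ‖u - v‖ = ⨅ w : K, ‖u - w‖ := by
    refine le_antisymm (le_ciInf fun w => hmin w w.2) ?_
    refine ciInf_le ⟨0, ?_⟩ (⟨v, hv⟩ : K)
    rintro x ⟨w, rfl⟩
    exact norm_nonneg _
  exact (norm_eq_iInf_iff_real_inner_le_zero hK hv).mp heq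

lemma proj_nonexp {K : Set E} (p : E → E) (hmem : ∀ x, p x ∈ K)
    (hchar : ∀ x, ∀ w ∈ K, (inner ℝ (x - p x) (w - p x) : ℝ) ≤ 0) (x y : E) :
    ‖p x - p y‖ ≤ ‖x - y‖ := by
  have h1 := hchar x (p y) (hmem y)
  have h2 := hchar y (p x) (hmem x)
  have key : ‖p x - p y‖ ^ 2 ≤ (inner ℝ (x - y) (p x - p y) : ℝ) := by
    have e1 : (0 : ℝ) ≤ inner ℝ (x - p x) (p x - p y) := by
      rw [← neg_sub (p x) (p y), inner_neg_right, neg_nonpos] at h1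
      exact h1
    have e3 : (0 : ℝ) ≤ inner ℝ ((x - p x) - (y - p y)) (p x - p y) := by
      rw [inner_sub_left]; linarith
    have e4 : (x - p x) - (y - p y) = (x - y) - (p x - p y) := by abel
    rw [e4, inner_sub_left, real_inner_self_eq_norm_sq] at e3
    linarith
  have h3 : (inner ℝ (x - y) (p x - p y) : ℝ) ≤ ‖x - y‖ * ‖p x - p y‖ :=
    real_inner_le_norm _ _
  nlinarith [norm_nonneg (p x - p y), norm_nonneg (x - y),
    mul_self_nonneg (‖x - y‖ - ‖p x - p y‖)]

end Hilbert

end Stmt10Aux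

set_option maxHeartbeats 2000000
open Stmt10Aux

/-- Convergence of forward-backward vGFNE seeking for the affine
pseudo-gradient `F(Φ) = 2 G Φ (W Wᵀ) + h`: with `M = 2 μ λ_min(W Wᵀ)`,
`L = 2‖G‖₂‖W‖₂²` and `η ∈ (0, 2M/L²)`, the variational inequality over the nonempty
closed convex set `U` has a unique solution `Φ*`, and the projected-gradient iterates
contract towards it with rate `√(1 - η(2M - ηL²)) < 1`, hence converge linearly. -/
theorem stmt10 {a b c : ℕ} (G : Matrix (Fin a) (Fin a) ℝ) (μ : ℝ) (hμ : 0 < μ)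
    (hG : (((1 : ℝ) / 2) • (G + Gᵀ) - μ • (1 : Matrix (Fin a) (Fin a) ℝ)).PosSemidef)
    (W : Matrix (Fin b) (Fin c) ℝ) (hWW : (W * Wᵀ).PosDef)
    (h : Matrix (Fin a) (Fin b) ℝ)
    (U : Set (Matrix (Fin a) (Fin b) ℝ)) (hUne : U.Nonempty) (hUcl : IsClosed U)
    (hUcv : Convex ℝ U)
    (M L : ℝ) (hM : M = 2 * μ * ⨅ i, hWW.1.eigenvalues i)
    (hL : L = 2 * specNorm G * specNorm W ^ 2)
    (η : ℝ) (hη : 0 < η) (hη2 : η < 2 * M / L ^ 2)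
    (proj : Matrix (Fin a) (Fin b) ℝ → Matrix (Fin a) (Fin b) ℝ)
    (hproj : ∀ X, proj X ∈ U ∧ ∀ Y ∈ U, frobNorm (X - proj X) ≤ frobNorm (X - Y)) :
    ∃ Φstar ∈ U,
      (∀ Φ ∈ U,
        0 ≤ Matrix.trace (((2 : ℝ) • (G * Φstar * (W * Wᵀ)) + h)ᵀ * (Φ - Φstar))) ∧
      (∀ Ψ ∈ U,
        (∀ Φ ∈ U,
          0 ≤ Matrix.trace (((2 : ℝ) • (G * Ψ * (W * Wᵀ)) + h)ᵀ * (Φ - Ψ))) →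
        Ψ = Φstar) ∧
      Real.sqrt (1 - η * (2 * M - η * L ^ 2)) < 1 ∧
      ∀ seq : ℕ → Matrix (Fin a) (Fin b) ℝ,
        (∀ k, seq (k + 1) =
          proj (seq k - η • ((2 : ℝ) • (G * seq k * (W * Wᵀ)) + h))) →
        (∀ k, frobNorm (seq (k + 1) - Φstar) ≤
            Real.sqrt (1 - η * (2 * M - η * L ^ 2)) * frobNorm (seq k - Φstar)) ∧
        Filter.Tendsto seq Filter.atTop (nhds Φstar) := by
  classical
  set t : ℝ := ⨅ i, hWW.1.eigenvalues i with htdef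
  -- positivity of the constants
  have hL2pos : 0 < L ^ 2 := by
    rcases (sq_nonneg L).lt_or_eq with h' | h'
    · exact h'
    · exfalso
      rw [← h', div_zero] at hη2
      linarith
  have hηL2 : η * L ^ 2 < 2 * M := (lt_div_iff₀ hL2pos).mp hη2
  have hMpos : 0 < M := by nlinarith [mul_pos hη hL2pos]
  have hqlt1 : Real.sqrt (1 - η * (2 * M - η * L ^ 2)) < 1 := by
    have h' := (Real.sqrt_lt' one_pos).mpr
      (show 1 - η * (2 * M - η * L ^ 2) < 1 ^ 2 by nlinarith [mul_pos hη hL2pos])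
    simpa using h'
  set q : ℝ := Real.sqrt (1 - η * (2 * M - η * L ^ 2)) with hqdef
  have hq0 : 0 ≤ q := Real.sqrt_nonneg _
  -- matrix-level monotonicity and Lipschitz bounds
  have hS : (W * Wᵀ).PosSemidef := hWW.posSemidef
  have htpsd : (W * Wᵀ - t • (1 : Matrix (Fin b) (Fin b) ℝ)).PosSemidef :=
    sub_iInf_smul_posSemidef hWW.1
  have hmonoM : ∀ Δ : Matrix (Fin a) (Fin b) ℝ,
      M * Matrix.trace (Δᵀ * Δ) ≤ Matrix.trace (((2:ℝ) • (G * Δ * (W * Wᵀ)))ᵀ * Δ) := by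
    intro Δ
    have h' := mono_trace G hμ.le hG hS htpsd Δ
    rw [hM]
    exact h'
  have hspecG : 0 ≤ specNorm G := norm_nonneg _
  have hspecW : 0 ≤ specNorm W := norm_nonneg _
  have hlipM : ∀ Δ : Matrix (Fin a) (Fin b) ℝ,
      frobNorm ((2:ℝ) • (G * Δ * (W * Wᵀ))) ≤ L * frobNorm Δ := by
    intro Δ
    have a1 := frob_mul_le G (Δ * (W * Wᵀ))
    have a2 := frob_mul_right Δ (W * Wᵀ)
    have a3 := spec_mul_le W Wᵀ
    rw [spec_transpose] at a3
    have hfr : 0 ≤ frobNorm Δ := frob_nonneg Δ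
    have b1 : frobNorm (Δ * (W * Wᵀ)) ≤ specNorm W * specNorm W * frobNorm Δ := by
      calc frobNorm (Δ * (W * Wᵀ)) ≤ specNorm (W * Wᵀ) * frobNorm Δ := a2
        _ ≤ specNorm W * specNorm W * frobNorm Δ := mul_le_mul_of_nonneg_right a3 hfr
    calc frobNorm ((2:ℝ) • (G * Δ * (W * Wᵀ)))
        = 2 * frobNorm (G * (Δ * (W * Wᵀ))) := by
          rw [frob_smul]
          norm_num [Matrix.mul_assoc]
      _ ≤ 2 * (specNorm G * frobNorm (Δ * (W * Wᵀ))) := by linarith [a1]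
      _ ≤ 2 * (specNorm G * (specNorm W * specNorm W * frobNorm Δ)) := by
          nlinarith [mul_le_mul_of_nonneg_left b1 hspecG]
      _ = L * frobNorm Δ := by rw [hL]; ring
  -- Euclidean-space setup
  set Fm : Matrix (Fin a) (Fin b) ℝ → Matrix (Fin a) (Fin b) ℝ :=
      fun X => (2:ℝ) • (G * X * (W * Wᵀ)) + h with hFm
  set f : EuclideanSpace ℝ (Fin a × Fin b) → EuclideanSpace ℝ (Fin a × Fin b) :=
      fun x => matE a b (Fm ((matE a b).symm x)) with hf
  set pE : EuclideanSpace ℝ (Fin a × Fin b) → EuclideanSpace ℝ (Fin a × Fin b) :=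
      fun x => matE a b (proj ((matE a b).symm x)) with hpE
  set K : Set (EuclideanSpace ℝ (Fin a × Fin b)) := (matE a b) '' U with hKdef
  set T : EuclideanSpace ℝ (Fin a × Fin b) → EuclideanSpace ℝ (Fin a × Fin b) :=
      fun x => pE (x - η • f x) with hT
  have hKcv : Convex ℝ K := by
    have h' := hUcv.linear_image
      ((matE a b : Matrix (Fin a) (Fin b) ℝ ≃ₗ[ℝ] EuclideanSpace ℝ (Fin a × Fin b)) :
        Matrix (Fin a) (Fin b) ℝ →ₗ[ℝ] EuclideanSpace ℝ (Fin a × Fin b))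
    rw [hKdef]
    simpa using h'
  have hpmem : ∀ x, pE x ∈ K := by
    intro x
    rw [hKdef]
    exact ⟨proj ((matE a b).symm x), (hproj _).1, by simp only [hpE]⟩
  have hnormdiff : ∀ (x : EuclideanSpace ℝ (Fin a × Fin b)) (Z : Matrix (Fin a) (Fin b) ℝ),
      ‖x - matE a b Z‖ = frobNorm ((matE a b).symm x - Z) := by
    intro x Z
    rw [frob_eq_norm, map_sub, LinearEquiv.apply_symm_apply]
  have hpmin : ∀ x, ∀ w ∈ K, ‖x - pE x‖ ≤ ‖x - w‖ := by
    intro x w hw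
    rw [hKdef] at hw
    obtain ⟨Y, hY, rfl⟩ := hw
    simp only [hpE]
    rw [hnormdiff x (proj ((matE a b).symm x)), hnormdiff x Y]
    exact (hproj _).2 Y hY
  have hchar : ∀ x, ∀ w ∈ K, (inner ℝ (x - pE x) (w - pE x) : ℝ) ≤ 0 :=
    fun x => proj_char hKcv (hpmem x) (hpmin x)
  have hnonexp : ∀ x y, ‖pE x - pE y‖ ≤ ‖x - y‖ := proj_nonexp pE hpmem hchar
  -- monotonicity and Lipschitz in Euclidean form
  have hFmdiff : ∀ X Y : Matrix (Fin a) (Fin b) ℝ,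
      Fm X - Fm Y = (2:ℝ) • (G * (X - Y) * (W * Wᵀ)) := by
    intro X Y
    simp only [hFm]
    have h' : G * (X - Y) * (W * Wᵀ) = G * X * (W * Wᵀ) - G * Y * (W * Wᵀ) := by
      rw [Matrix.mul_sub, Matrix.sub_mul]
    rw [h', smul_sub]
    abel
  have hfdiff : ∀ x y, f x - f y
      = matE a b ((2:ℝ) • (G * ((matE a b).symm x - (matE a b).symm y) * (W * Wᵀ))) := by
    intro x y
    simp only [hf]
    rw [← map_sub, hFmdiff]
  have hxy : ∀ x y : EuclideanSpace ℝ (Fin a × Fin b),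
      x - y = matE a b ((matE a b).symm x - (matE a b).symm y) := by
    intro x y
    rw [map_sub, LinearEquiv.apply_symm_apply, LinearEquiv.apply_symm_apply]
  have hmonoE : ∀ x y, M * ‖x - y‖ ^ 2 ≤ (inner ℝ (f x - f y) (x - y) : ℝ) := by
    intro x y
    rw [hfdiff x y, hxy x y, inner_matE, ← frob_eq_norm, frob_sq]
    exact hmonoM _
  have hlipE : ∀ x y, ‖f x - f y‖ ≤ L * ‖x - y‖ := by
    intro x y
    rw [hfdiff x y, hxy x y, ← frob_eq_norm, ← frob_eq_norm]
    exact hlipM _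
  -- contraction of T
  have hcontr : ∀ x y, ‖T x - T y‖ ≤ q * ‖x - y‖ := by
    intro x y
    simp only [hT]
    have h1 : ‖pE (x - η • f x) - pE (y - η • f y)‖ ≤ ‖(x - η • f x) - (y - η • f y)‖ :=
      hnonexp _ _
    have e0 : (x - η • f x) - (y - η • f y) = (x - y) - η • (f x - f y) := by
      rw [smul_sub]; abel
    have i3 := hmonoE x y
    have i4 : ‖f x - f y‖ ^ 2 ≤ L ^ 2 * ‖x - y‖ ^ 2 := by
      have h' := hlipE x y
      nlinarith [norm_nonneg (f x - f y), norm_nonneg (x - y)]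
    have expand : ‖(x - η • f x) - (y - η • f y)‖ ^ 2
        ≤ (1 - η * (2 * M - η * L ^ 2)) * ‖x - y‖ ^ 2 := by
      rw [e0, norm_sub_sq_real, real_inner_smul_right, real_inner_comm, norm_smul, mul_pow]
      have habs : ‖η‖ ^ 2 = η ^ 2 := by rw [Real.norm_eq_abs, sq_abs]
      rw [habs]
      nlinarith [mul_le_mul_of_nonneg_left i3 hη.le,
        mul_le_mul_of_nonneg_left i4 (sq_nonneg η)]
    calc ‖pE (x - η • f x) - pE (y - η • f y)‖
        ≤ ‖(x - η • f x) - (y - η • f y)‖ := h1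
      _ = Real.sqrt (‖(x - η • f x) - (y - η • f y)‖ ^ 2) :=
          (Real.sqrt_sq (norm_nonneg _)).symm
      _ ≤ Real.sqrt ((1 - η * (2 * M - η * L ^ 2)) * ‖x - y‖ ^ 2) :=
          Real.sqrt_le_sqrt expand
      _ = q * ‖x - y‖ := by
          rw [Real.sqrt_mul' _ (sq_nonneg _), Real.sqrt_sq (norm_nonneg _), hqdef]
  -- Banach fixed point
  set Kq : NNReal := ⟨q, hq0⟩ with hKq
  have hlipT : LipschitzWith Kq T :=
    LipschitzWith.of_dist_le_mul fun x y => by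
      rw [dist_eq_norm, dist_eq_norm]; exact hcontr x y
  have hcw : ContractingWith Kq T := ⟨by exact_mod_cast hqlt1, hlipT⟩
  have hfix : T (ContractingWith.fixedPoint T hcw) = ContractingWith.fixedPoint T hcw :=
    hcw.fixedPoint_isFixedPt
  set xstar := ContractingWith.fixedPoint T hcw with hxs
  have hxK : xstar ∈ K := by rw [← hfix]; exact hpmem _
  have hxK' := hxK
  rw [hKdef] at hxK'
  obtain ⟨Φs0, hΦs0U, hΦs0e⟩ := hxK'
  set Φstar := (matE a b).symm xstar with hΦs
  have hΦU : Φstar ∈ U := by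
    rw [hΦs, ← hΦs0e, LinearEquiv.symm_apply_apply]; exact hΦs0U
  have heΦ : matE a b Φstar = xstar := by rw [hΦs, LinearEquiv.apply_symm_apply]
  -- variational inequality in Euclidean form
  have hpfix : pE (xstar - η • f xstar) = xstar := by
    have h' := hfix
    simp only [hT] at h'
    exact h'
  have hVIE : ∀ w ∈ K, 0 ≤ (inner ℝ (f xstar) (w - xstar) : ℝ) := by
    intro w hw
    have hc := hchar (xstar - η • f xstar) w hw
    rw [hpfix] at hc
    have e' : (xstar - η • f xstar) - xstar = -(η • f xstar) := by abel
    rw [e', inner_neg_left, neg_nonpos, real_inner_smul_left] at hc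
    by_contra hneg
    push_neg at hneg
    nlinarith [mul_pos hη (neg_pos.mpr hneg)]
  have hVImat : ∀ Φ ∈ U,
      0 ≤ Matrix.trace (((2:ℝ) • (G * Φstar * (W * Wᵀ)) + h)ᵀ * (Φ - Φstar)) := by
    intro Φ hΦ
    have hw : matE a b Φ ∈ K := by rw [hKdef]; exact ⟨Φ, hΦ, rfl⟩
    have h' := hVIE (matE a b Φ) hw
    have hfx : f xstar = matE a b (Fm Φstar) := by
      simp only [hf]
      rfl
    rw [hfx, ← heΦ, ← map_sub, inner_matE] at h'
    simpa only [hFm] using h'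
  -- uniqueness
  have huniq : ∀ Ψ ∈ U,
      (∀ Φ ∈ U, 0 ≤ Matrix.trace (((2:ℝ) • (G * Ψ * (W * Wᵀ)) + h)ᵀ * (Φ - Ψ))) →
      Ψ = Φstar := by
    intro Ψ hΨ hVIΨ
    have hyE : ∀ w ∈ K, 0 ≤ (inner ℝ (f (matE a b Ψ)) (w - matE a b Ψ) : ℝ) := by
      intro w hw
      rw [hKdef] at hw
      obtain ⟨Φ, hΦ, rfl⟩ := hw
      have hfΨ : f (matE a b Ψ) = matE a b (Fm Ψ) := by
        simp only [hf, LinearEquiv.symm_apply_apply]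
      rw [hfΨ, ← map_sub, inner_matE]
      have h' := hVIΨ Φ hΦ
      simpa only [hFm] using h'
    have h1 := hyE xstar hxK
    have h2 := hVIE (matE a b Ψ) (by rw [hKdef]; exact ⟨Ψ, hΨ, rfl⟩)
    have hm := hmonoE (matE a b Ψ) xstar
    have hsum : (inner ℝ (f (matE a b Ψ) - f xstar) (matE a b Ψ - xstar) : ℝ) ≤ 0 := by
      rw [inner_sub_left]
      have h1' : (inner ℝ (f (matE a b Ψ)) (matE a b Ψ - xstar) : ℝ) ≤ 0 := by
        have e' : matE a b Ψ - xstar = -(xstar - matE a b Ψ) := by abel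
        rw [e', inner_neg_right]
        linarith
      linarith
    have hzero : ‖matE a b Ψ - xstar‖ ^ 2 ≤ 0 := by nlinarith
    have hnz : ‖matE a b Ψ - xstar‖ = 0 := by
      nlinarith [norm_nonneg (matE a b Ψ - xstar)]
    have hy : matE a b Ψ = xstar := sub_eq_zero.mp (norm_eq_zero.mp hnz)
    calc Ψ = (matE a b).symm (matE a b Ψ) := (LinearEquiv.symm_apply_apply _ _).symm
      _ = (matE a b).symm xstar := by rw [hy]
      _ = Φstar := hΦs.symm
  refine ⟨Φstar, hΦU, hVImat, huniq, hqlt1, ?_⟩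
  intro seq hseq
  -- iterates in Euclidean space
  have hEstep : ∀ k, matE a b (seq (k + 1)) = T (matE a b (seq k)) := by
    intro k
    rw [hseq k]
    simp only [hT, hpE, hf, hFm, LinearEquiv.symm_apply_apply, map_sub, map_smul]
  have hnormseq : ∀ m : ℕ, frobNorm (seq m - Φstar) = ‖matE a b (seq m) - xstar‖ := by
    intro m
    rw [frob_eq_norm, map_sub, heΦ]
  have hfrobstep : ∀ k, frobNorm (seq (k + 1) - Φstar) ≤ q * frobNorm (seq k - Φstar) := by
    intro k
    rw [hnormseq, hnormseq, hEstep k]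
    calc ‖T (matE a b (seq k)) - xstar‖ = ‖T (matE a b (seq k)) - T xstar‖ := by rw [hfix]
      _ ≤ q * ‖matE a b (seq k) - xstar‖ := hcontr _ _
  refine ⟨hfrobstep, ?_⟩
  have hdbound : ∀ k, frobNorm (seq k - Φstar) ≤ q ^ k * frobNorm (seq 0 - Φstar) := by
    intro k
    induction k with
    | zero => simp
    | succ n ih =>
      calc frobNorm (seq (n + 1) - Φstar) ≤ q * frobNorm (seq n - Φstar) := hfrobstep n
        _ ≤ q * (q ^ n * frobNorm (seq 0 - Φstar)) := by
            exact mul_le_mul_of_nonneg_left ih hq0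
        _ = q ^ (n + 1) * frobNorm (seq 0 - Φstar) := by ring
  have hd0 : Filter.Tendsto (fun k => frobNorm (seq k - Φstar)) Filter.atTop (nhds 0) := by
    have hgeo : Filter.Tendsto (fun k => q ^ k * frobNorm (seq 0 - Φstar))
        Filter.atTop (nhds 0) := by
      have h' := tendsto_pow_atTop_nhds_zero_of_lt_one hq0 hqlt1
      simpa using h'.mul_const (frobNorm (seq 0 - Φstar))
    exact squeeze_zero (fun k => frob_nonneg _) hdbound hgeo
  refine tendsto_pi_nhds.mpr ?_
  intro i
  rw [tendsto_pi_nhds]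
  intro j
  rw [← tendsto_sub_nhds_zero_iff]
  refine squeeze_zero_norm (fun k => ?_) hd0
  have h' := abs_entry_le_frob (seq k - Φstar) i j
  simpa [Real.norm_eq_abs, Matrix.sub_apply] using h'
end

section
/- Time-domain achievability of system level responses (output feedback): let A ∈ ℝ^{n_x×n_x}, B ∈ ℝ^{n_x×n_u}, C ∈ ℝ^{n_y×n_x}, and let matrix sequences Φ_xx : ℕ → ℝ^{n_x×n_x}, Φ_ux : ℕ → ℝ^{n_u×n_x}, Φ_xy : ℕ → ℝ^{n_x×n_y}, Φ_uy : ℕ → ℝ^{n_u×n_y} satisfy: Φ_xx(0) = 0, Φ_xx(1) = I, Φ_ux(0) = 0, Φ_xy(0) = 0; the primal recursions Φ_xx(n+1) = A·Φ_xx(n) + B·Φ_ux(n) for all n ≥ 1 and Φ_xy(n+1) = A·Φ_xy(n) + B·Φ_uy(n) for all n ≥ 0; and the dual recursions Φ_xx(n+1) = Φ_xx(n)·A + Φ_xy(n)·C for all n ≥ 1 and Φ_ux(n+1) = Φ_ux(n)·A + Φ_uy(n)·C for all n ≥ 0. Given arbitrary disturbance sequences δx : ℕ → ℝ^{n_x}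 and δy : ℕ → ℝ^{n_y}, define the controller internal state ξ : ℕ → ℝ^{n_x} and the closed-loop trajectories x : ℕ → ℝ^{n_x}, u : ℕ → ℝ^{n_u}, y : ℕ → ℝ^{n_y} by: x₀ = 0, ξ₀ = 0, y_t = C x_t + δy_t, ξ_{t+1} = −Σ_{n=0}^{t} Φ_xx(n+2) ξ_{t−n} − Σ_{n=0}^{t} Φ_xy(n+1) y_{t−n}, u_t = Σ_{n=0}^{t} Φ_ux(n+1) ξ_{t−n} + Σ_{n=0}^{t} Φ_uy(n) y_{t−n}, and x_{t+1} = A x_t + δx_t + B u_t. Then for every t ∈ ℕ: x_t = Σ_{n=1}^{t} Φ_xx(n) δx_{t−n} + Σ_{n=1}^{t} Φ_xy(n) δy_{t−n} and u_t = Σ_{n=1}^{t} Φ_ux(n) δx_{t−n} + Σ_{n=0}^{t} Φ_uy(n) δy_{t−n}; that is, the implemented output-feedback controller achieves exactly the prescribed system level responses from the disturbances to the state and input. -/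
open scoped Matrix

open Finset

private lemma mulVec_sum' {m n : ℕ} {ι : Type*} (M : Matrix (Fin m) (Fin n) ℝ)
    (s : Finset ι) (f : ι → Fin n → ℝ) :
    M.mulVec (∑ i ∈ s, f i) = ∑ i ∈ s, M.mulVec (f i) := by
  classical
  induction s using Finset.induction_on with
  | empty => simp
  | insert _ _ h ih => simp [Finset.sum_insert h, Matrix.mulVec_add, ih]

private lemma sum_mulVec' {m n : ℕ} {ι : Type*} (s : Finset ι)
    (f : ι → Matrix (Fin m) (Fin n) ℝ) (v : Fin n → ℝ) :
    ∑ i ∈ s, (f i).mulVec v = (∑ i ∈ s, f i).mulVec v := by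
  classical
  induction s using Finset.induction_on with
  | empty => simp
  | insert _ _ h ih => simp [Finset.sum_insert h, Matrix.add_mulVec, ih]

private lemma sum_shift0 {M : Type*} [AddCommMonoid M] (s : ℕ) (F : ℕ → M)
    (h0 : F 0 = 0) : ∑ n ∈ range (s+1), F n = ∑ n ∈ range s, F (n+1) := by
  rw [Finset.sum_range_succ', h0, add_zero]

private lemma tri {M : Type*} [AddCommMonoid M] (t : ℕ) (g : ℕ → ℕ → M) :
    ∑ n ∈ range (t+1), ∑ m ∈ range (t+1-n), g n m
      = ∑ j ∈ range (t+1), ∑ i ∈ range (j+1), g i (j-i) := by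
  rw [Finset.sum_sigma' (range (t+1)) (fun n => range (t+1-n)) (fun n m => g n m),
    Finset.sum_sigma' (range (t+1)) (fun j => range (j+1)) (fun j i => g i (j-i))]
  refine Finset.sum_nbij' (fun p => ⟨p.1 + p.2, p.1⟩) (fun p => ⟨p.2, p.1 - p.2⟩) ?_ ?_ ?_ ?_ ?_
  · rintro ⟨a, b⟩ h
    simp only [Finset.mem_sigma, Finset.mem_range] at h ⊢
    omega
  · rintro ⟨a, b⟩ h
    simp only [Finset.mem_sigma, Finset.mem_range] at h ⊢
    omega
  · rintro ⟨a, b⟩ h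
    simp [Nat.add_sub_cancel_left]
  · rintro ⟨a, b⟩ h
    simp only [Finset.mem_sigma, Finset.mem_range] at h
    have hb : b + (a - b) = a := by omega
    simp [hb]
  · rintro ⟨a, b⟩ h
    simp [Nat.add_sub_cancel_left]

private lemma sum_range_eq_Icc {M : Type*} [AddCommMonoid M] (f : ℕ → M) (t : ℕ)
    (h0 : f 0 = 0) : ∑ n ∈ range (t+1), f n = ∑ n ∈ Icc 1 t, f n := by
  have h : range (t+1) = insert 0 (Icc 1 t) := by
    ext n; simp only [Finset.mem_range, Finset.mem_insert, Finset.mem_Icc]; omega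
  rw [h, Finset.sum_insert (by simp), h0, zero_add]

private lemma xi_sum {k nx nu : ℕ} (B : Matrix (Fin nx) (Fin nu) ℝ)
    (u : ℕ → Fin nu → ℝ) (ξ : ℕ → Fin nx → ℝ) (hξ0 : ξ 0 = 0) (t : ℕ)
    (h : ∀ s, s < t → ξ (s+1) = -B.mulVec (u s)) {K : ℕ → Matrix (Fin k) (Fin nx) ℝ} :
    ∑ n ∈ range (t+1), (K n).mulVec (ξ (t-n))
      = -∑ n ∈ range t, (K n).mulVec (B.mulVec (u (t-1-n))) := by
  rw [Finset.sum_range_succ, Nat.sub_self, hξ0, Matrix.mulVec_zero, add_zero,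
    ← Finset.sum_neg_distrib]
  refine Finset.sum_congr rfl fun n hn => ?_
  have hn' := Finset.mem_range.mp hn
  have h1 : t - n = (t-1-n)+1 := by omega
  rw [h1, h _ (by omega), Matrix.mulVec_neg]


private lemma double_conv {a b c d : ℕ} (t : ℕ)
    (P : ℕ → Matrix (Fin a) (Fin b) ℝ) (M : Matrix (Fin b) (Fin c) ℝ)
    (Q : ℕ → Matrix (Fin c) (Fin d) ℝ) (v : ℕ → Fin d → ℝ) :
    ∑ n ∈ range (t+1), (P n).mulVec (M.mulVec (∑ m ∈ range (t-n+1), (Q m).mulVec (v (t-n-m))))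
      = ∑ j ∈ range (t+1), (∑ i ∈ range (j+1), P i * M * Q (j-i)).mulVec (v (t-j)) := by
  calc ∑ n ∈ range (t+1), (P n).mulVec (M.mulVec (∑ m ∈ range (t-n+1), (Q m).mulVec (v (t-n-m))))
      = ∑ n ∈ range (t+1), ∑ m ∈ range (t+1-n), (P n * M * Q m).mulVec (v (t-n-m)) := by
        refine Finset.sum_congr rfl fun n hn => ?_
        have hn' := Finset.mem_range.mp hn
        rw [mulVec_sum', mulVec_sum', show t-n+1 = t+1-n by omega]
        refine Finset.sum_congr rfl fun m hm => ?_
        rw [Matrix.mulVec_mulVec, Matrix.mulVec_mulVec]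
    _ = ∑ j ∈ range (t+1), ∑ i ∈ range (j+1), (P i * M * Q (j-i)).mulVec (v (t-i-(j-i))) :=
        tri t _
    _ = ∑ j ∈ range (t+1), (∑ i ∈ range (j+1), P i * M * Q (j-i)).mulVec (v (t-j)) := by
        refine Finset.sum_congr rfl fun j hj => ?_
        have hj' := Finset.mem_range.mp hj
        rw [← sum_mulVec']
        refine Finset.sum_congr rfl fun i hi => ?_
        have hi' := Finset.mem_range.mp hi
        rw [show t-i-(j-i) = t-j by omega]

section kernels
variable {nx nu ny : ℕ}
  (A : Matrix (Fin nx) (Fin nx) ℝ) (B : Matrix (Fin nx) (Fin nu) ℝ)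
  (C : Matrix (Fin ny) (Fin nx) ℝ)
section kernels
variable {nx nu ny : ℕ}
  (A : Matrix (Fin nx) (Fin nx) ℝ) (B : Matrix (Fin nx) (Fin nu) ℝ)
  (C : Matrix (Fin ny) (Fin nx) ℝ)
  (Φxx : ℕ → Matrix (Fin nx) (Fin nx) ℝ) (Φux : ℕ → Matrix (Fin nu) (Fin nx) ℝ)
  (Φxy : ℕ → Matrix (Fin nx) (Fin ny) ℝ) (Φuy : ℕ → Matrix (Fin nu) (Fin ny) ℝ)

private lemma K1 (hxx0 : Φxx 0 = 0) (hxx1 : Φxx 1 = 1) (hux0 : Φux 0 = 0)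
    (hprimal_x : ∀ n, 1 ≤ n → Φxx (n + 1) = A * Φxx n + B * Φux n)
    (hdual_u : ∀ n, Φux (n + 1) = Φux n * A + Φuy n * C) (j : ℕ) :
    ∑ i ∈ range (j+1), Φuy i * C * Φxx (j-i)
      = Φux j + ∑ i ∈ range (j+1), Φux i * B * Φux (j-i) := by
  have hdu : ∀ i, Φuy i * C = Φux (i+1) - Φux i * A := by
    intro i; rw [hdual_u i]; abel
  cases j with
  | zero => simp [hxx0, hux0]
  | succ k =>
    have hL : ∀ i ∈ range (k+2), Φuy i * C * Φxx (k+1-i)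
        = Φux (i+1) * Φxx (k+1-i) - Φux i * (A * Φxx (k+1-i)) := by
      intro i _; rw [hdu i, Matrix.sub_mul, Matrix.mul_assoc]
    rw [Finset.sum_congr rfl hL, Finset.sum_sub_distrib]
    have hS1 : ∑ i ∈ range (k+2), Φux (i+1) * Φxx (k+1-i)
        = (∑ i ∈ range k, Φux (i+1) * Φxx (k-i+1)) + Φux (k+1) := by
      rw [Finset.sum_range_succ, Nat.sub_self, hxx0, Matrix.mul_zero, add_zero,
        Finset.sum_range_succ]
      have h1 : Φxx (k+1-k) = 1 := by rw [show k+1-k = 1 by omega, hxx1]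
      rw [h1, Matrix.mul_one]
      congr 1
      refine Finset.sum_congr rfl fun i hi => ?_
      have := Finset.mem_range.mp hi
      rw [show k+1-i = k-i+1 by omega]
    have hS2 : ∑ i ∈ range (k+2), Φux i * (A * Φxx (k+1-i))
        = (∑ i ∈ range k, Φux (i+1) * Φxx (k-i+1))
          - ∑ i ∈ range k, Φux (i+1) * (B * Φux (k-i)) := by
      rw [sum_shift0 _ _ (by simp [hux0]), Finset.sum_range_succ]
      have hz : Φux (k+1) * (A * Φxx (k+1-(k+1))) = 0 := by
        rw [Nat.sub_self, hxx0, Matrix.mul_zero, Matrix.mul_zero]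
      rw [hz, add_zero]
      have hstep : ∀ i ∈ range k, Φux (i+1) * (A * Φxx (k+1-(i+1)))
          = Φux (i+1) * Φxx (k-i+1) - Φux (i+1) * (B * Φux (k-i)) := by
        intro i hi
        have hik := Finset.mem_range.mp hi
        rw [show k+1-(i+1) = k-i by omega,
          show A * Φxx (k-i) = Φxx (k-i+1) - B * Φux (k-i) from by
            rw [hprimal_x (k-i) (by omega)]; abel,
          Matrix.mul_sub]
      rw [Finset.sum_congr rfl hstep, Finset.sum_sub_distrib]
    rw [hS1, hS2]
    have hR : ∑ i ∈ range (k+2), Φux i * B * Φux (k+1-i)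
        = ∑ i ∈ range k, Φux (i+1) * (B * Φux (k-i)) := by
      rw [sum_shift0 _ _ (by simp [hux0]), Finset.sum_range_succ]
      have hz : Φux (k+1) * B * Φux (k+1-(k+1)) = 0 := by
        rw [Nat.sub_self, hux0, Matrix.mul_zero]
      rw [hz, add_zero]
      refine Finset.sum_congr rfl fun i hi => ?_
      have := Finset.mem_range.mp hi
      rw [show k+1-(i+1) = k-i by omega, Matrix.mul_assoc]
    rw [hR]; abel

private lemma K2 (hxy0 : Φxy 0 = 0) (hux0 : Φux 0 = 0)
    (hprimal_y : ∀ n, Φxy (n + 1) = A * Φxy n + B * Φuy n)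
    (hdual_u : ∀ n, Φux (n + 1) = Φux n * A + Φuy n * C) (j : ℕ) :
    ∑ i ∈ range (j+1), Φuy i * C * Φxy (j-i)
      = ∑ i ∈ range (j+1), Φux i * B * Φuy (j-i) := by
  have hdu : ∀ i, Φuy i * C = Φux (i+1) - Φux i * A := by
    intro i; rw [hdual_u i]; abel
  have hL : ∀ i ∈ range (j+1), Φuy i * C * Φxy (j-i)
      = Φux (i+1) * Φxy (j-i) - (Φux i * Φxy (j-i+1) - Φux i * (B * Φuy (j-i))) := by
    intro i _
    rw [hdu i, Matrix.sub_mul]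
    congr 1
    rw [Matrix.mul_assoc,
      show A * Φxy (j-i) = Φxy (j-i+1) - B * Φuy (j-i) from by
        rw [hprimal_y (j-i)]; abel,
      Matrix.mul_sub]
  rw [Finset.sum_congr rfl hL, Finset.sum_sub_distrib, Finset.sum_sub_distrib]
  have hS1 : ∑ i ∈ range (j+1), Φux (i+1) * Φxy (j-i)
      = ∑ i ∈ range (j+1), Φux i * Φxy (j-i+1) := by
    rw [Finset.sum_range_succ, Nat.sub_self, hxy0, Matrix.mul_zero, add_zero]
    rw [sum_shift0 _ _ (by simp [hux0])]
    refine (Finset.sum_congr rfl fun i hi => ?_).symm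
    have := Finset.mem_range.mp hi
    rw [show j-(i+1)+1 = j-i by omega]
  rw [hS1, sub_sub_cancel]
  exact Finset.sum_congr rfl fun i _ => (Matrix.mul_assoc _ _ _).symm

end kernels


/-- Time-domain achievability of system level responses (output
feedback): if the kernels `(Φxx, Φux, Φxy, Φuy)` satisfy the primal and dual system
level recursions, then the controller implementation with internal state `ξ` produces
closed-loop trajectories whose state and input are exactly the prescribed convolutions
of the disturbances with the system level responses. -/
theorem stmt11 {nx nu ny : ℕ}
    (A : Matrix (Fin nx) (Fin nx) ℝ) (B : Matrix (Fin nx) (Fin nu) ℝ)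
    (C : Matrix (Fin ny) (Fin nx) ℝ)
    (Φxx : ℕ → Matrix (Fin nx) (Fin nx) ℝ) (Φux : ℕ → Matrix (Fin nu) (Fin nx) ℝ)
    (Φxy : ℕ → Matrix (Fin nx) (Fin ny) ℝ) (Φuy : ℕ → Matrix (Fin nu) (Fin ny) ℝ)
    (hxx0 : Φxx 0 = 0) (hxx1 : Φxx 1 = 1) (hux0 : Φux 0 = 0) (hxy0 : Φxy 0 = 0)
    (hprimal_x : ∀ n, 1 ≤ n → Φxx (n + 1) = A * Φxx n + B * Φux n)
    (hprimal_y : ∀ n, Φxy (n + 1) = A * Φxy n + B * Φuy n)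
    (hdual_x : ∀ n, 1 ≤ n → Φxx (n + 1) = Φxx n * A + Φxy n * C)
    (hdual_u : ∀ n, Φux (n + 1) = Φux n * A + Φuy n * C)
    (δx : ℕ → Fin nx → ℝ) (δy : ℕ → Fin ny → ℝ)
    (x ξ : ℕ → Fin nx → ℝ) (u : ℕ → Fin nu → ℝ) (y : ℕ → Fin ny → ℝ)
    (hx0 : x 0 = 0) (hξ0 : ξ 0 = 0)
    (hy : ∀ t, y t = C.mulVec (x t) + δy t)
    (hξ : ∀ t, ξ (t + 1) =
      -(∑ n ∈ Finset.range (t + 1), (Φxx (n + 2)).mulVec (ξ (t - n))) -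
        ∑ n ∈ Finset.range (t + 1), (Φxy (n + 1)).mulVec (y (t - n)))
    (hu : ∀ t, u t =
      (∑ n ∈ Finset.range (t + 1), (Φux (n + 1)).mulVec (ξ (t - n))) +
        ∑ n ∈ Finset.range (t + 1), (Φuy n).mulVec (y (t - n)))
    (hxdyn : ∀ t, x (t + 1) = A.mulVec (x t) + δx t + B.mulVec (u t)) :
    ∀ t, x t = (∑ n ∈ Finset.Icc 1 t, (Φxx n).mulVec (δx (t - n))) +
          ∑ n ∈ Finset.Icc 1 t, (Φxy n).mulVec (δy (t - n)) ∧
        u t = (∑ n ∈ Finset.Icc 1 t, (Φux n).mulVec (δx (t - n))) +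
          ∑ n ∈ Finset.range (t + 1), (Φuy n).mulVec (δy (t - n)) := by
  have lemA : ∀ t, ((∑ n ∈ range (t+1), (Φxx (n+1)).mulVec (B.mulVec (u (t-n)))
        = ∑ n ∈ range (t+1), (Φxy (n+1)).mulVec (y (t-n))) ∧
      ξ (t+1) = -(B.mulVec (u t))) := by
    intro t
    induction t using Nat.strong_induction_on with
    | _ t ih =>
    have hxi : ∀ s, s < t → ξ (s+1) = -B.mulVec (u s) := fun s hs => (ih s hs).2
    have hU : ∑ n ∈ range (t+1), (Φuy n).mulVec (y (t-n))
        = u t + ∑ n ∈ range t, (Φux (n+1)).mulVec (B.mulVec (u (t-1-n))) := by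
      rw [hu t, xi_sum B u ξ hξ0 t hxi]; abel
    have hC1 : ∑ n ∈ range t, (Φxx (n+1)).mulVec (B.mulVec (u (t-1-n)))
        = ∑ n ∈ range (t+1), (Φxy n).mulVec (y (t-n)) := by
      cases t with
      | zero => simp [hxy0]
      | succ τ =>
        rw [sum_shift0 (τ+1) (fun n => (Φxy n).mulVec (y (τ+1-n))) (by simp [hxy0])]
        have h1 := (ih τ (by omega)).1
        calc ∑ n ∈ range (τ+1), (Φxx (n+1)).mulVec (B.mulVec (u (τ+1-1-n)))
            = ∑ n ∈ range (τ+1), (Φxx (n+1)).mulVec (B.mulVec (u (τ-n))) := by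
              refine Finset.sum_congr rfl fun n hn => ?_
              rw [show τ+1-1-n = τ-n by omega]
          _ = ∑ n ∈ range (τ+1), (Φxy (n+1)).mulVec (y (τ-n)) := h1
          _ = ∑ n ∈ range (τ+1), (Φxy (n+1)).mulVec (y (τ+1-(n+1))) := by
              refine Finset.sum_congr rfl fun n hn => ?_
              rw [show τ+1-(n+1) = τ-n by omega]
    have hA1 : ∑ n ∈ range (t+1), (Φxx (n+1)).mulVec (B.mulVec (u (t-n)))
        = ∑ n ∈ range (t+1), (Φxy (n+1)).mulVec (y (t-n)) := by
      rw [Finset.sum_range_succ']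
      have e0 : (Φxx (0+1)).mulVec (B.mulVec (u (t-0))) = B.mulVec (u t) := by
        norm_num [hxx1, Matrix.one_mulVec]
      have eL : ∀ n ∈ range t, (Φxx (n+1+1)).mulVec (B.mulVec (u (t-(n+1))))
          = A.mulVec ((Φxx (n+1)).mulVec (B.mulVec (u (t-1-n))))
            + B.mulVec ((Φux (n+1)).mulVec (B.mulVec (u (t-1-n)))) := by
        intro n hn
        rw [show t-(n+1) = t-1-n by omega, hprimal_x (n+1) (by omega), Matrix.add_mulVec,
          ← Matrix.mulVec_mulVec, ← Matrix.mulVec_mulVec]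
      have eR : ∀ n ∈ range (t+1), (Φxy (n+1)).mulVec (y (t-n))
          = A.mulVec ((Φxy n).mulVec (y (t-n))) + B.mulVec ((Φuy n).mulVec (y (t-n))) := by
        intro n hn
        rw [hprimal_y n, Matrix.add_mulVec, ← Matrix.mulVec_mulVec, ← Matrix.mulVec_mulVec]
      rw [Finset.sum_congr rfl eL, Finset.sum_congr rfl eR, Finset.sum_add_distrib,
        Finset.sum_add_distrib, e0, ← mulVec_sum' A, ← mulVec_sum' A, ← mulVec_sum' B,
        ← mulVec_sum' B, hC1, hU, Matrix.mulVec_add]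
      abel
    refine ⟨hA1, ?_⟩
    have hrw : ∑ n ∈ range (t+1), (Φxy (n+1)).mulVec (y (t-n))
        = (∑ n ∈ range t, (Φxx (n+2)).mulVec (B.mulVec (u (t-1-n)))) + B.mulVec (u t) := by
      rw [← hA1, Finset.sum_range_succ']
      congr 1
      · refine Finset.sum_congr rfl fun n hn => ?_
        rw [show t-(n+1) = t-1-n by omega]
      · norm_num [hxx1, Matrix.one_mulVec]
    rw [hξ t, xi_sum B u ξ hξ0 t hxi, hrw]
    abel
  have hB : ∀ t, u t = (∑ n ∈ range (t+1), (Φuy n).mulVec (y (t-n)))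
      - ∑ n ∈ range t, (Φux (n+1)).mulVec (B.mulVec (u (t-1-n))) := by
    intro t; rw [hu t, xi_sum B u ξ hξ0 t (fun s _ => (lemA s).2)]; abel
  have main : ∀ t, (x t = (∑ n ∈ range (t+1), (Φxx n).mulVec (δx (t-n)))
        + ∑ n ∈ range (t+1), (Φxy n).mulVec (δy (t-n)))
      ∧ (u t = (∑ n ∈ range (t+1), (Φux n).mulVec (δx (t-n)))
        + ∑ n ∈ range (t+1), (Φuy n).mulVec (δy (t-n))) := by
    intro t
    induction t using Nat.strong_induction_on with
    | _ t ih =>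
    have hxt : x t = (∑ n ∈ range (t+1), (Φxx n).mulVec (δx (t-n)))
        + ∑ n ∈ range (t+1), (Φxy n).mulVec (δy (t-n)) := by
      cases t with
      | zero => simp [hx0, hxx0, hxy0]
      | succ τ =>
        obtain ⟨hxτ, huτ⟩ := ih τ (by omega)
        rw [hxdyn τ, hxτ, huτ, Matrix.mulVec_add, Matrix.mulVec_add,
          mulVec_sum' A, mulVec_sum' A, mulVec_sum' B, mulVec_sum' B]
        have e1 : ∑ n ∈ range (τ+1+1), (Φxx n).mulVec (δx (τ+1-n))
            = ∑ n ∈ range (τ+1), (Φxx (n+1)).mulVec (δx (τ-n)) := by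
          rw [sum_shift0 (τ+1) (fun n => (Φxx n).mulVec (δx (τ+1-n))) (by simp [hxx0])]
          exact Finset.sum_congr rfl fun n hn => by rw [show τ+1-(n+1) = τ-n by omega]
        have e2 : ∑ n ∈ range (τ+1+1), (Φxy n).mulVec (δy (τ+1-n))
            = ∑ n ∈ range (τ+1), (Φxy (n+1)).mulVec (δy (τ-n)) := by
          rw [sum_shift0 (τ+1) (fun n => (Φxy n).mulVec (δy (τ+1-n))) (by simp [hxy0])]
          exact Finset.sum_congr rfl fun n hn => by rw [show τ+1-(n+1) = τ-n by omega]
        have e3 : ∑ n ∈ range (τ+1), (Φxx (n+1)).mulVec (δx (τ-n))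
            = (∑ n ∈ range (τ+1), A.mulVec ((Φxx n).mulVec (δx (τ-n))))
              + (∑ n ∈ range (τ+1), B.mulVec ((Φux n).mulVec (δx (τ-n)))) + δx τ := by
          rw [Finset.sum_range_succ',
            sum_shift0 τ (fun n => A.mulVec ((Φxx n).mulVec (δx (τ-n)))) (by simp [hxx0]),
            sum_shift0 τ (fun n => B.mulVec ((Φux n).mulVec (δx (τ-n)))) (by simp [hux0]),
            ← Finset.sum_add_distrib]
          have hb : (Φxx (0+1)).mulVec (δx (τ-0)) = δx τ := by
            norm_num [hxx1, Matrix.one_mulVec]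
          rw [hb]
          congr 1
          refine Finset.sum_congr rfl fun n hn => ?_
          rw [hprimal_x (n+1) (by omega), Matrix.add_mulVec,
            ← Matrix.mulVec_mulVec, ← Matrix.mulVec_mulVec]
        have e4 : ∑ n ∈ range (τ+1), (Φxy (n+1)).mulVec (δy (τ-n))
            = (∑ n ∈ range (τ+1), A.mulVec ((Φxy n).mulVec (δy (τ-n))))
              + ∑ n ∈ range (τ+1), B.mulVec ((Φuy n).mulVec (δy (τ-n))) := by
          rw [← Finset.sum_add_distrib]
          refine Finset.sum_congr rfl fun n hn => ?_
          rw [hprimal_y n, Matrix.add_mulVec, ← Matrix.mulVec_mulVec, ← Matrix.mulVec_mulVec]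
        rw [e1, e2, e3, e4]
        abel
    have hut : u t = (∑ n ∈ range (t+1), (Φux n).mulVec (δx (t-n)))
        + ∑ n ∈ range (t+1), (Φuy n).mulVec (δy (t-n)) := by
      have hxc : ∀ n ∈ range (t+1), x (t-n)
          = (∑ m ∈ range (t-n+1), (Φxx m).mulVec (δx (t-n-m)))
            + ∑ m ∈ range (t-n+1), (Φxy m).mulVec (δy (t-n-m)) := by
        intro n hn
        rcases Nat.eq_zero_or_pos n with rfl | hpos
        · simpa using hxt
        · have := Finset.mem_range.mp hn
          exact (ih (t-n) (by omega)).1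
      have hy2 : ∑ n ∈ range (t+1), (Φuy n).mulVec (y (t-n))
          = ((∑ n ∈ range (t+1), (Φuy n).mulVec (C.mulVec
                (∑ m ∈ range (t-n+1), (Φxx m).mulVec (δx (t-n-m)))))
            + ∑ n ∈ range (t+1), (Φuy n).mulVec (C.mulVec
                (∑ m ∈ range (t-n+1), (Φxy m).mulVec (δy (t-n-m)))))
            + ∑ n ∈ range (t+1), (Φuy n).mulVec (δy (t-n)) := by
        rw [← Finset.sum_add_distrib, ← Finset.sum_add_distrib]
        refine Finset.sum_congr rfl fun n hn => ?_
        rw [hy (t-n), hxc n hn, Matrix.mulVec_add, Matrix.mulVec_add, Matrix.mulVec_add]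
      have hu2 : ∑ n ∈ range t, (Φux (n+1)).mulVec (B.mulVec (u (t-1-n)))
          = (∑ n ∈ range (t+1), (Φux n).mulVec (B.mulVec
              (∑ m ∈ range (t-n+1), (Φux m).mulVec (δx (t-n-m)))))
            + ∑ n ∈ range (t+1), (Φux n).mulVec (B.mulVec
              (∑ m ∈ range (t-n+1), (Φuy m).mulVec (δy (t-n-m)))) := by
        symm
        rw [← Finset.sum_add_distrib,
          sum_shift0 t (fun n => (Φux n).mulVec (B.mulVec
              (∑ m ∈ range (t-n+1), (Φux m).mulVec (δx (t-n-m))))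
            + (Φux n).mulVec (B.mulVec
              (∑ m ∈ range (t-n+1), (Φuy m).mulVec (δy (t-n-m))))) (by simp [hux0])]
        refine Finset.sum_congr rfl fun n hn => ?_
        have hn' := Finset.mem_range.mp hn
        rw [show t-(n+1) = t-1-n by omega, (ih (t-1-n) (by omega)).2,
          Matrix.mulVec_add, Matrix.mulVec_add]
      have key1 : ∑ n ∈ range (t+1), (Φuy n).mulVec (C.mulVec
            (∑ m ∈ range (t-n+1), (Φxx m).mulVec (δx (t-n-m))))
          = (∑ n ∈ range (t+1), (Φux n).mulVec (δx (t-n)))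
            + ∑ n ∈ range (t+1), (Φux n).mulVec (B.mulVec
              (∑ m ∈ range (t-n+1), (Φux m).mulVec (δx (t-n-m)))) := by
        rw [double_conv t Φuy C Φxx δx, double_conv t Φux B Φux δx,
          ← Finset.sum_add_distrib]
        refine Finset.sum_congr rfl fun j hj => ?_
        rw [K1 A B C Φxx Φux Φuy hxx0 hxx1 hux0 hprimal_x hdual_u j, Matrix.add_mulVec]
      have key2 : ∑ n ∈ range (t+1), (Φuy n).mulVec (C.mulVec
            (∑ m ∈ range (t-n+1), (Φxy m).mulVec (δy (t-n-m))))
          = ∑ n ∈ range (t+1), (Φux n).mulVec (B.mulVec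
              (∑ m ∈ range (t-n+1), (Φuy m).mulVec (δy (t-n-m)))) := by
        rw [double_conv t Φuy C Φxy δy, double_conv t Φux B Φuy δy]
        exact Finset.sum_congr rfl fun j hj => by
          rw [K2 A B C Φux Φxy Φuy hxy0 hux0 hprimal_y hdual_u j]
      rw [hB t, hy2, hu2, key1, key2]
      abel
    exact ⟨hxt, hut⟩
  intro t
  obtain ⟨h1, h2⟩ := main t
  constructor
  · rw [h1, sum_range_eq_Icc (fun n => (Φxx n).mulVec (δx (t-n))) t (by simp [hxx0]),
      sum_range_eq_Icc (fun n => (Φxy n).mulVec (δy (t-n))) t (by simp [hxy0])]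
  · rw [h2, sum_range_eq_Icc (fun n => (Φux n).mulVec (δx (t-n))) t (by simp [hux0])]
end kernels
end

section
/- Adjoint-state formula for the system-level objective gradient: let A ∈ ℝ^{n_x×n_x}, B ∈ ℝ^{n_x×n_u}, E ∈ ℝ^{n_x×m}, W_x ∈ ℝ^{n_z×n_x}, W_u ∈ ℝ^{n_z×n_u} with W_uᵀ W_x = 0, and W_w ∈ ℝ^{m×n_w}, and fix a horizon N ≥ 1. For Φ_u : {0, …, N} → ℝ^{n_u×m}, define the state response Φ_x : {0, …, N} → ℝ^{n_x×m} by Φ_x(0) = 0, Φ_x(1) = E + B·Φ_u(0), and Φ_x(n+1) = A·Φ_x(n) + B·Φ_u(n) for 1 ≤ n ≤ N−1, and define the objective J(Φ_u) = Σ_{n=0}^{N} ‖(W_x·Φ_x(n) + W_u·Φ_u(n))·W_w‖_F². Define the adjoint variables Δ : {0, …, N} → ℝ^{n_x×m} by the backward recursion Δ(N) = 0 and Δ(n−1) = Aᵀ·Δ(n) + (W_xᵀ W_x)·Φ_x(n) for 1 ≤ n ≤ N. Then J is differentiable and its gradient with respect to the Frobenius inner product is given componentwise, for each n ∈ {0,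 …, N}, by ∇_{Φ_u(n)} J(Φ_u) = 2·(W_uᵀ W_u)·Φ_u(n)·(W_w W_wᵀ) + 2·Bᵀ·Δ(n)·(W_w W_wᵀ). -/
open scoped Matrix

attribute [local instance] Matrix.frobeniusSeminormedAddCommGroup
  Matrix.frobeniusNormedAddCommGroup Matrix.frobeniusNormedSpace

namespace Stmt13Aux

variable {nx nu nz m nw : ℕ}

/-- Homogeneous (linear-in-`V`) part of the state response recursion. -/
def dphi (A : Matrix (Fin nx) (Fin nx) ℝ) (B : Matrix (Fin nx) (Fin nu) ℝ)
    (V : ℕ → Matrix (Fin nu) (Fin m) ℝ) : ℕ → Matrix (Fin nx) (Fin m) ℝ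
  | 0 => 0
  | n + 1 => A * dphi A B V n + B * V n

/-- Constant (noise-injection) part of the state response. -/
def evec (A : Matrix (Fin nx) (Fin nx) ℝ) (E : Matrix (Fin nx) (Fin m) ℝ) :
    ℕ → Matrix (Fin nx) (Fin m) ℝ
  | 0 => 0
  | n + 1 => if n = 0 then E else A * evec A E n

lemma dphi_add (A : Matrix (Fin nx) (Fin nx) ℝ) (B : Matrix (Fin nx) (Fin nu) ℝ)
    (V W : ℕ → Matrix (Fin nu) (Fin m) ℝ) (n : ℕ) :
    dphi A B (fun k => V k + W k) n = dphi A B V n + dphi A B W n := by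
  induction n with
  | zero => simp [dphi]
  | succ n ih => simp [dphi, ih, Matrix.mul_add]; abel

lemma dphi_smul (A : Matrix (Fin nx) (Fin nx) ℝ) (B : Matrix (Fin nx) (Fin nu) ℝ)
    (t : ℝ) (V : ℕ → Matrix (Fin nu) (Fin m) ℝ) (n : ℕ) :
    dphi A B (fun k => t • V k) n = t • dphi A B V n := by
  induction n with
  | zero => simp [dphi]
  | succ n ih => simp [dphi, ih, Matrix.mul_smul, smul_add]

/-- Extension of a `Fin (N+1)`-indexed family to `ℕ`. -/
def extF {α : Type*} (N : ℕ) (u : Fin (N + 1) → α) (k : ℕ) : α :=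
  u ⟨k % (N + 1), Nat.mod_lt _ (Nat.succ_pos N)⟩

lemma extF_coe {α : Type*} (N : ℕ) (u : Fin (N + 1) → α) (i : Fin (N + 1)) :
    extF N u (i : ℕ) = u i := by
  simp [extF, Nat.mod_eq_of_lt i.isLt]

lemma extF_lt {α : Type*} (N : ℕ) (u : Fin (N + 1) → α) (k : ℕ) (hk : k < N + 1) :
    extF N u k = u ⟨k, hk⟩ := by
  simp [extF, Nat.mod_eq_of_lt hk]

/-- The linear part of `u ↦ (Wx Φx(n) + Wu u(n)) Ww`. -/
def Lmap (N : ℕ) (A : Matrix (Fin nx) (Fin nx) ℝ) (B : Matrix (Fin nx) (Fin nu) ℝ)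
    (Wx : Matrix (Fin nz) (Fin nx) ℝ) (Wu : Matrix (Fin nz) (Fin nu) ℝ)
    (Ww : Matrix (Fin m) (Fin nw) ℝ) (n : ℕ) :
    (Fin (N + 1) → Matrix (Fin nu) (Fin m) ℝ) →ₗ[ℝ] Matrix (Fin nz) (Fin nw) ℝ where
  toFun u := (Wx * dphi A B (extF N u) n + Wu * extF N u n) * Ww
  map_add' u v := by
    have h : extF N (u + v) = fun k => extF N u k + extF N v k := rfl
    show (Wx * dphi A B (extF N (u + v)) n + Wu * extF N (u + v) n) * Ww = _
    rw [h, dphi_add]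
    simp [Matrix.mul_add, Matrix.add_mul]
    abel
  map_smul' t u := by
    have h : extF N (t • u) = fun k => t • extF N u k := rfl
    show (Wx * dphi A B (extF N (t • u)) n + Wu * extF N (t • u) n) * Ww = _
    rw [h, dphi_smul]
    simp [Matrix.mul_smul, Matrix.smul_mul, smul_add, Matrix.add_mul]

/-- Entry evaluation as a linear functional. -/
def entryLM (i : Fin nz) (j : Fin nw) : Matrix (Fin nz) (Fin nw) ℝ →ₗ[ℝ] ℝ where
  toFun X := X i j
  map_add' _ _ := rfl
  map_smul' _ _ := rfl

lemma trace_transpose_mul_eq_sum {a b : ℕ} (X Y : Matrix (Fin a) (Fin b) ℝ) :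
    Matrix.trace (Xᵀ * Y) = ∑ j, ∑ i, X i j * Y i j := by
  simp [Matrix.trace, Matrix.mul_apply, Matrix.diag, Matrix.transpose_apply]

lemma hasFDerivAt_quad {F : Type*} [NormedAddCommGroup F] [NormedSpace ℝ F]
    [FiniteDimensional ℝ F] (c : ℝ) (l : F →ₗ[ℝ] ℝ) (u0 : F) :
    HasFDerivAt (fun u => (c + l u) * (c + l u))
      ((2 * (c + l u0)) • l.toContinuousLinearMap) u0 := by
  have h1 : HasFDerivAt (fun u => c + l u) (l.toContinuousLinearMap : F →L[ℝ] ℝ) u0 := by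
    exact ((hasFDerivAt_const c u0).add l.toContinuousLinearMap.hasFDerivAt).congr_fderiv (zero_add _)
  have := h1.mul h1
  rw [two_mul, add_smul]
  exact this

lemma hasFDerivAt_sumsq {F : Type*} [NormedAddCommGroup F] [NormedSpace ℝ F]
    [FiniteDimensional ℝ F] {ι : Type*} [Fintype ι]
    (C : ι → Matrix (Fin nz) (Fin nw) ℝ)
    (L : ι → F →ₗ[ℝ] Matrix (Fin nz) (Fin nw) ℝ) (u0 : F) :
    HasFDerivAt (fun u => ∑ n : ι, Matrix.trace ((C n + L n u)ᵀ * (C n + L n u)))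
      (∑ n : ι, ∑ j : Fin nw, ∑ i : Fin nz,
        (2 * ((C n + L n u0) i j)) • ((entryLM i j).comp (L n)).toContinuousLinearMap) u0 := by
  have key : ∀ u, (∑ n : ι, Matrix.trace ((C n + L n u)ᵀ * (C n + L n u)))
      = ∑ n : ι, ∑ j : Fin nw, ∑ i : Fin nz,
        (C n i j + (entryLM i j).comp (L n) u) * (C n i j + (entryLM i j).comp (L n) u) := by
    intro u
    refine Finset.sum_congr rfl fun n _ => ?_
    rw [trace_transpose_mul_eq_sum]
    simp [entryLM, Matrix.add_apply, LinearMap.coe_mk, AddHom.coe_mk]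
    rfl
  simp only [key]
  refine HasFDerivAt.fun_sum fun n _ => HasFDerivAt.fun_sum fun j _ => HasFDerivAt.fun_sum fun i _ => ?_
  have h := hasFDerivAt_quad (C n i j) ((entryLM i j).comp (L n)) u0
  exact h

/-- The `Ww`-weighted Frobenius pairing `⟨X, Y⟩ = tr(Ww Wwᵀ Xᵀ Y)`. -/
def pI (Ww : Matrix (Fin m) (Fin nw) ℝ) {a : ℕ} (X Y : Matrix (Fin a) (Fin m) ℝ) : ℝ :=
  Matrix.trace (Ww * Wwᵀ * Xᵀ * Y)

variable (Ww : Matrix (Fin m) (Fin nw) ℝ)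

lemma pI_zero_left {a : ℕ} (Y : Matrix (Fin a) (Fin m) ℝ) : pI Ww 0 Y = 0 := by simp [pI]

lemma pI_zero_right {a : ℕ} (X : Matrix (Fin a) (Fin m) ℝ) : pI Ww X 0 = 0 := by simp [pI]

lemma pI_adjoint {a b : ℕ} (M : Matrix (Fin a) (Fin b) ℝ)
    (Z : Matrix (Fin a) (Fin m) ℝ) (W : Matrix (Fin b) (Fin m) ℝ) :
    pI Ww (Mᵀ * Z) W = pI Ww Z (M * W) := by
  simp [pI, Matrix.transpose_mul, Matrix.mul_assoc]

lemma pI_add_left {a : ℕ} (X Y Z : Matrix (Fin a) (Fin m) ℝ) :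
    pI Ww (X + Y) Z = pI Ww X Z + pI Ww Y Z := by
  simp [pI, Matrix.transpose_add, Matrix.mul_add, Matrix.add_mul]

lemma pI_add_right {a : ℕ} (X Y Z : Matrix (Fin a) (Fin m) ℝ) :
    pI Ww X (Y + Z) = pI Ww X Y + pI Ww X Z := by
  simp [pI, Matrix.mul_add]

lemma trace_Ww {c : ℕ} (P Q : Matrix (Fin c) (Fin m) ℝ) :
    Matrix.trace ((P * Ww)ᵀ * (Q * Ww)) = pI Ww P Q := by
  rw [pI, Matrix.transpose_mul]
  rw [show Wwᵀ * Pᵀ * (Q * Ww) = Wwᵀ * Pᵀ * Q * Ww by simp [Matrix.mul_assoc]]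
  rw [Matrix.trace_mul_comm]
  rw [Matrix.mul_assoc, Matrix.mul_assoc, Matrix.mul_assoc]

lemma expandP (Wx : Matrix (Fin nz) (Fin nx) ℝ)
    (Wu : Matrix (Fin nz) (Fin nu) ℝ) (hW : Wuᵀ * Wx = 0)
    (X Y : Matrix (Fin nx) (Fin m) ℝ) (U Z : Matrix (Fin nu) (Fin m) ℝ) :
    Matrix.trace (((Wx * X + Wu * U) * Ww)ᵀ * ((Wx * Y + Wu * Z) * Ww))
      = pI Ww (Wxᵀ * Wx * X) Y + pI Ww (Wuᵀ * Wu * U) Z := by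
  have hW' : Wxᵀ * Wu = 0 := by
    have := congrArg Matrix.transpose hW
    simpa [Matrix.transpose_mul] using this
  rw [trace_Ww]
  have e1 : ∀ (P : Matrix (Fin nx) (Fin m) ℝ) (Q : Matrix (Fin nu) (Fin m) ℝ),
      pI Ww (Wx * P + Wu * Q) (Wx * Y + Wu * Z)
        = pI Ww (Wx * P) (Wx * Y) + pI Ww (Wu * Q) (Wu * Z) := by
    intro P Q
    rw [pI_add_left, pI_add_right, pI_add_right]
    have c1 : pI Ww (Wx * P) (Wu * Z) = 0 := by
      rw [show Wx * P = Wxᵀᵀ * P by rw [Matrix.transpose_transpose], pI_adjoint,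
        ← Matrix.mul_assoc, hW', Matrix.zero_mul, pI_zero_right]
    have c2 : pI Ww (Wu * Q) (Wx * Y) = 0 := by
      rw [show Wu * Q = Wuᵀᵀ * Q by rw [Matrix.transpose_transpose], pI_adjoint,
        ← Matrix.mul_assoc, hW, Matrix.zero_mul, pI_zero_right]
    rw [c1, c2]; ring
  rw [e1, Matrix.mul_assoc Wxᵀ Wx X, pI_adjoint, Matrix.mul_assoc Wuᵀ Wu U, pI_adjoint]

lemma trace_smul_form {a : ℕ} (X Z : Matrix (Fin a) (Fin m) ℝ) :
    Matrix.trace ((X * (Ww * Wwᵀ))ᵀ * Z) = pI Ww X Z := by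
  simp [pI, Matrix.transpose_mul, Matrix.mul_assoc]

lemma adjoint_sum {N : ℕ}
    (A : Matrix (Fin nx) (Fin nx) ℝ) (B : Matrix (Fin nx) (Fin nu) ℝ)
    (Q Δ d : ℕ → Matrix (Fin nx) (Fin m) ℝ) (V : ℕ → Matrix (Fin nu) (Fin m) ℝ)
    (hd0 : d 0 = 0)
    (hdrec : ∀ n, n < N → d (n + 1) = A * d n + B * V n)
    (hΔN : Δ N = 0)
    (hΔ : ∀ n, 1 ≤ n → n ≤ N → Δ (n - 1) = Aᵀ * Δ n + Q n) :
    ∑ n ∈ Finset.range (N + 1), pI Ww (Q n) (d n)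
      = ∑ n ∈ Finset.range (N + 1), pI Ww (Δ n) (B * V n) := by
  have step : ∀ n < N, pI Ww (Q (n + 1)) (d (n + 1)) - pI Ww (Δ n) (B * V n)
      = pI Ww (Δ n) (A * d n) - pI Ww (Δ (n + 1)) (A * d (n + 1)) := by
    intro n hn
    have hΔn : Δ n = Aᵀ * Δ (n + 1) + Q (n + 1) := by
      simpa using hΔ (n + 1) (by omega) (by omega)
    have h1 : pI Ww (Δ n) (d (n + 1))
        = pI Ww (Δ (n + 1)) (A * d (n + 1)) + pI Ww (Q (n + 1)) (d (n + 1)) := by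
      rw [hΔn, pI_add_left, pI_adjoint]
    have h2 : pI Ww (Δ n) (d (n + 1))
        = pI Ww (Δ n) (A * d n) + pI Ww (Δ n) (B * V n) := by
      rw [hdrec n hn, pI_add_right]
    linarith
  have tel : ∑ n ∈ Finset.range N,
      (pI Ww (Q (n + 1)) (d (n + 1)) - pI Ww (Δ n) (B * V n)) = 0 := by
    have := Finset.sum_range_sub' (fun n => pI Ww (Δ n) (A * d n)) N
    rw [Finset.sum_congr rfl fun n hn => step n (Finset.mem_range.mp hn), this,
      hd0, hΔN, Matrix.mul_zero, pI_zero_right, pI_zero_left, sub_zero]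
  rw [Finset.sum_sub_distrib] at tel
  have tel' : ∑ n ∈ Finset.range N, pI Ww (Q (n + 1)) (d (n + 1))
      = ∑ n ∈ Finset.range N, pI Ww (Δ n) (B * V n) := by linarith
  rw [Finset.sum_range_succ', Finset.sum_range_succ, hd0, hΔN,
    pI_zero_right, pI_zero_left, add_zero, add_zero, tel']

end Stmt13Aux

open Stmt13Aux

/-- Adjoint-state formula for the gradient of the system-level
objective `J(Φu) = Σₙ ‖(Wx Φx(n) + Wu Φu(n)) Ww‖_F²`, where `Φx` is the state response
generated by `Φu` through the dynamics and `Δ` is the adjoint variable obtained by the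
backward recursion: `J` is differentiable and its gradient with respect to the
Frobenius inner product is, componentwise,
`∇_{Φu(n)} J = 2 (Wuᵀ Wu) Φu(n) (Ww Wwᵀ) + 2 Bᵀ Δ(n) (Ww Wwᵀ)`. -/
theorem stmt13 {nx nu nz m nw : ℕ} {N : ℕ} (hN : 1 ≤ N)
    (A : Matrix (Fin nx) (Fin nx) ℝ) (B : Matrix (Fin nx) (Fin nu) ℝ)
    (E : Matrix (Fin nx) (Fin m) ℝ)
    (Wx : Matrix (Fin nz) (Fin nx) ℝ) (Wu : Matrix (Fin nz) (Fin nu) ℝ)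
    (hW : Wuᵀ * Wx = 0)
    (Ww : Matrix (Fin m) (Fin nw) ℝ)
    (Φxf : (Fin (N + 1) → Matrix (Fin nu) (Fin m) ℝ) → ℕ → Matrix (Fin nx) (Fin m) ℝ)
    (hΦx0 : ∀ Φu, Φxf Φu 0 = 0)
    (hΦx1 : ∀ Φu, Φxf Φu 1 = E + B * Φu 0)
    (hΦxrec : ∀ Φu n, ∀ _ : 1 ≤ n, ∀ _ : n ≤ N - 1,
      Φxf Φu (n + 1) = A * Φxf Φu n + B * Φu ⟨n, by omega⟩)
    (J : (Fin (N + 1) → Matrix (Fin nu) (Fin m) ℝ) → ℝ)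
    (hJ : ∀ Φu, J Φu = ∑ n : Fin (N + 1),
      Matrix.trace
        (((Wx * Φxf Φu n + Wu * Φu n) * Ww)ᵀ * ((Wx * Φxf Φu n + Wu * Φu n) * Ww)))
    (Φu0 : Fin (N + 1) → Matrix (Fin nu) (Fin m) ℝ)
    (Δ : ℕ → Matrix (Fin nx) (Fin m) ℝ)
    (hΔN : Δ N = 0)
    (hΔrec : ∀ n, 1 ≤ n → n ≤ N → Δ (n - 1) = Aᵀ * Δ n + (Wxᵀ * Wx) * Φxf Φu0 n) :
    Differentiable ℝ J ∧
      ∀ V : Fin (N + 1) → Matrix (Fin nu) (Fin m) ℝ,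
        fderiv ℝ J Φu0 V = ∑ n : Fin (N + 1),
          Matrix.trace
            (((2 : ℝ) • ((Wuᵀ * Wu) * Φu0 n * (Ww * Wwᵀ)) +
                (2 : ℝ) • (Bᵀ * Δ n * (Ww * Wwᵀ)))ᵀ * V n) := by
  -- the state response is affine in the input response
  have key : ∀ u (n : ℕ), n ≤ N →
      Φxf u n = evec A E n + dphi A B (extF N u) n := by
    intro u n
    induction n with
    | zero => intro _; simp [hΦx0, evec, dphi]
    | succ k ih =>
      intro hk
      cases k with
      | zero =>
        rw [hΦx1]
        have h0 : extF N u 0 = u 0 := by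
          rw [extF_lt N u 0 (by omega)]; rfl
        simp [evec, dphi, h0]
      | succ j =>
        have h1 := hΦxrec u (j + 1) (by omega) (by omega)
        rw [h1, ih (by omega)]
        have h2 : extF N u (j + 1) = u ⟨j + 1, by omega⟩ := extF_lt N u (j + 1) (by omega)
        show _ = evec A E (j + 1 + 1) + dphi A B (extF N u) (j + 1 + 1)
        rw [show evec A E (j + 1 + 1) = A * evec A E (j + 1) by simp [evec]]
        rw [show dphi A B (extF N u) (j + 1 + 1)
            = A * dphi A B (extF N u) (j + 1) + B * extF N u (j + 1) from rfl]
        rw [h2, Matrix.mul_add]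
        abel
  -- abbreviations
  set Cm : Fin (N + 1) → Matrix (Fin nz) (Fin nw) ℝ :=
    fun n => Wx * evec A E (n : ℕ) * Ww with hCm
  set Lm : Fin (N + 1) → (Fin (N + 1) → Matrix (Fin nu) (Fin m) ℝ) →ₗ[ℝ]
      Matrix (Fin nz) (Fin nw) ℝ :=
    fun n => Lmap N A B Wx Wu Ww (n : ℕ) with hLm
  have hM : ∀ (u : Fin (N + 1) → Matrix (Fin nu) (Fin m) ℝ) (n : Fin (N + 1)),
      Cm n + Lm n u = (Wx * Φxf u (n : ℕ) + Wu * u n) * Ww := by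
    intro u n
    have h1 : Lm n u = (Wx * dphi A B (extF N u) (n : ℕ) + Wu * extF N u (n : ℕ)) * Ww := rfl
    rw [h1, hCm, key u (n : ℕ) (by omega), extF_coe]
    simp [Matrix.mul_add, Matrix.add_mul]
    abel
  have hJ' : J = fun u => ∑ n : Fin (N + 1),
      Matrix.trace ((Cm n + Lm n u)ᵀ * (Cm n + Lm n u)) := by
    funext u
    rw [hJ]
    refine Finset.sum_congr rfl fun n _ => ?_
    rw [hM u n]
  have hder : ∀ u0, HasFDerivAt J
      (∑ n : Fin (N + 1), ∑ j : Fin nw, ∑ i : Fin nz,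
        (2 * ((Cm n + Lm n u0) i j)) •
          ((entryLM i j).comp (Lm n)).toContinuousLinearMap) u0 := by
    intro u0
    rw [hJ']
    exact hasFDerivAt_sumsq Cm Lm u0
  constructor
  · exact fun u0 => (hder u0).differentiableAt
  intro V
  rw [(hder Φu0).fderiv]
  -- compute the derivative applied to V
  have hDV : (∑ n : Fin (N + 1), ∑ j : Fin nw, ∑ i : Fin nz,
        (2 * ((Cm n + Lm n Φu0) i j)) •
          ((entryLM i j).comp (Lm n)).toContinuousLinearMap) V
      = ∑ n : Fin (N + 1), 2 * Matrix.trace ((Cm n + Lm n Φu0)ᵀ * (Lm n V)) := by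
    simp only [ContinuousLinearMap.sum_apply, ContinuousLinearMap.smul_apply,
      LinearMap.coe_toContinuousLinearMap', LinearMap.coe_comp, Function.comp_apply,
      smul_eq_mul]
    refine Finset.sum_congr rfl fun n _ => ?_
    rw [trace_transpose_mul_eq_sum, Finset.mul_sum]
    refine Finset.sum_congr rfl fun j _ => ?_
    rw [Finset.mul_sum]
    refine Finset.sum_congr rfl fun i _ => ?_
    show 2 * ((Cm n + Lm n Φu0) i j) * ((Lm n V) i j) = _
    ring
  rw [hDV]
  -- rewrite each term using the orthogonality expansion
  have hterm : ∀ n : Fin (N + 1),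
      2 * Matrix.trace ((Cm n + Lm n Φu0)ᵀ * (Lm n V))
        = 2 * pI Ww (Wxᵀ * Wx * Φxf Φu0 (n : ℕ)) (dphi A B (extF N V) (n : ℕ))
          + 2 * pI Ww (Wuᵀ * Wu * Φu0 n) (V n) := by
    intro n
    have h1 : Lm n V = (Wx * dphi A B (extF N V) (n : ℕ) + Wu * extF N V (n : ℕ)) * Ww := rfl
    rw [hM Φu0 n, h1, extF_coe, expandP Ww Wx Wu hW]
    ring
  have hrhs : ∀ n : Fin (N + 1),
      Matrix.trace
          (((2 : ℝ) • ((Wuᵀ * Wu) * Φu0 n * (Ww * Wwᵀ)) +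
              (2 : ℝ) • (Bᵀ * Δ (n : ℕ) * (Ww * Wwᵀ)))ᵀ * V n)
        = 2 * pI Ww (Wuᵀ * Wu * Φu0 n) (V n) + 2 * pI Ww (Δ (n : ℕ)) (B * V n) := by
    intro n
    rw [Matrix.transpose_add, Matrix.transpose_smul, Matrix.transpose_smul,
      Matrix.add_mul, Matrix.smul_mul, Matrix.smul_mul, Matrix.trace_add,
      Matrix.trace_smul, Matrix.trace_smul, smul_eq_mul, smul_eq_mul,
      trace_smul_form, trace_smul_form, pI_adjoint]
  simp only [hterm, hrhs]
  rw [Finset.sum_add_distrib, Finset.sum_add_distrib]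
  have hA : ∑ n : Fin (N + 1),
        2 * pI Ww (Wxᵀ * Wx * Φxf Φu0 (n : ℕ)) (dphi A B (extF N V) (n : ℕ))
      = ∑ n : Fin (N + 1), 2 * pI Ww (Δ (n : ℕ)) (B * V n) := by
    have e1 : ∑ n : Fin (N + 1),
          2 * pI Ww (Wxᵀ * Wx * Φxf Φu0 (n : ℕ)) (dphi A B (extF N V) (n : ℕ))
        = ∑ k ∈ Finset.range (N + 1),
          2 * pI Ww (Wxᵀ * Wx * Φxf Φu0 k) (dphi A B (extF N V) k) :=
      Fin.sum_univ_eq_sum_range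
        (fun k => 2 * pI Ww (Wxᵀ * Wx * Φxf Φu0 k) (dphi A B (extF N V) k)) (N + 1)
    have e2 : ∑ n : Fin (N + 1), 2 * pI Ww (Δ (n : ℕ)) (B * V n)
        = ∑ k ∈ Finset.range (N + 1), 2 * pI Ww (Δ k) (B * extF N V k) := by
      rw [← Fin.sum_univ_eq_sum_range (fun k => 2 * pI Ww (Δ k) (B * extF N V k)) (N + 1)]
      refine Finset.sum_congr rfl fun n _ => ?_
      rw [extF_coe]
    rw [e1, e2, ← Finset.mul_sum, ← Finset.mul_sum]
    congr 1
    exact adjoint_sum Ww A B (fun k => Wxᵀ * Wx * Φxf Φu0 k) Δ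
      (dphi A B (extF N V)) (extF N V) rfl (fun n _ => rfl) hΔN hΔrec
  rw [hA, add_comm]
end
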